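/- arXiv:1907.13402 — 3 statements merged into one kernel-verified Lean document; each statement's English description precedes it below -/
import Mathlib

section
/- Let X be a real Hilbert space and A, B nonempty closed convex subsets of X. Let {A_n} and {B_n} be sequences of nonempty closed convex subsets of X such that A_n → A and B_n → B in the Attouch-Wets sense. Suppose there exist y ∈ A ∩ B and a continuous linear functional f ∈ S_{X*} such that inf f(B) = f(y) = sup f(A) and f strongly exposes A at y. Then for every starting point a₀ ∈ X, the perturbed alternating projections sequences {a_n} and {b_n} (w.r.t. {A_n} and {B_n}, with starting point a₀) converge in norm to y. -/
open Filter Metric Topology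

/-- Attouch–Wets convergence of a sequence of sets:
for every `N`, `sup_{‖x‖ ≤ N} |dist(x, Aₙ) − dist(x, L)| → 0`. -/
def AWTendsto {X : Type*} [NormedAddCommGroup X] (A : ℕ → Set X) (L : Set X) : Prop :=
  ∀ N : ℕ, ∀ ε : ℝ, 0 < ε → ∃ n₀ : ℕ, ∀ n ≥ n₀, ∀ x : X, ‖x‖ ≤ (N : ℝ) →
    |Metric.infDist x (A n) - Metric.infDist x L| < ε

/-- `p` is a metric projection (nearest point) of `x` onto `K`. -/
def IsProjOn {X : Type*} [NormedAddCommGroup X] (K : Set X) (x p : X) : Prop :=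
  p ∈ K ∧ ∀ y ∈ K, dist x p ≤ dist x y

/-- `a`, `b` are the perturbed alternating projections sequences w.r.t. `A`, `B`
with starting point `a₀`: `bₙ = P_{Bₙ}(a_{n−1})` and `aₙ = P_{Aₙ}(bₙ)` for `n ≥ 1`. -/
def IsPerturbedAPS {X : Type*} [NormedAddCommGroup X]
    (A B : ℕ → Set X) (a₀ : X) (a b : ℕ → X) : Prop :=
  a 0 = a₀ ∧ ∀ n : ℕ,
    IsProjOn (B (n + 1)) (a n) (b (n + 1)) ∧ IsProjOn (A (n + 1)) (b (n + 1)) (a (n + 1))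

/-- `f` strongly exposes `A` at `a`: `f(a) = sup f(A)` and every sequence in `A` whose
`f`-values tend to `sup f(A)` converges in norm to `a`. -/
def StronglyExposes {X : Type*} [NormedAddCommGroup X] [NormedSpace ℝ X]
    (f : X →L[ℝ] ℝ) (A : Set X) (a : X) : Prop :=
  a ∈ A ∧ (∀ x ∈ A, f x ≤ f a) ∧
    ∀ x : ℕ → X, (∀ n, x n ∈ A) → Tendsto (fun n => f (x n)) atTop (nhds (f a)) →
      Tendsto x atTop (nhds a)

section Aux
variable {X : Type*} [NormedAddCommGroup X] [InnerProductSpace ℝ X]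

lemma proj_inner_le {K : Set X} (hK : Convex ℝ K) {x p : X} (h : IsProjOn K x p) :
    ∀ c ∈ K, inner ℝ (x - p) (c - p) ≤ (0:ℝ) := by
  have : Nonempty K := ⟨⟨p, h.1⟩⟩
  have heq : ‖x - p‖ = ⨅ w : K, ‖x - (w:X)‖ := by
    apply le_antisymm
    · exact le_ciInf fun w => by simpa [dist_eq_norm] using h.2 w w.2
    · exact ciInf_le ⟨0, by rintro r ⟨w, rfl⟩; exact norm_nonneg _⟩ (⟨p, h.1⟩ : K)
  exact (norm_eq_iInf_iff_real_inner_le_zero hK h.1).1 heq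

lemma proj_key {K : Set X} (hK : Convex ℝ K) {x p : X} (h : IsProjOn K x p)
    {c : X} (hc : c ∈ K) (v : X) :
    ‖p - v‖^2 ≤ ‖x - v‖^2 - ‖x - p‖^2 + 2 * ‖x - p‖ * ‖c - v‖ := by
  have h1 : inner ℝ (x - p) (c - p) ≤ (0:ℝ) := proj_inner_le hK h c hc
  have h2 : ‖x - v‖^2 = ‖x - p‖^2 + 2 * inner ℝ (x - p) (p - v) + ‖p - v‖^2 := by
    have := norm_add_sq_real (x - p) (p - v)
    rwa [sub_add_sub_cancel] at this
  have h3 : (inner ℝ (x - p) (p - v) : ℝ)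
      = inner ℝ (x - p) (p - c) + inner ℝ (x - p) (c - v) := by
    rw [← inner_add_right, sub_add_sub_cancel]
  have h4 : (0:ℝ) ≤ inner ℝ (x - p) (p - c) := by
    have he : p - c = -(c - p) := by abel
    rw [he, inner_neg_right]; linarith
  have h5 : -(‖x - p‖ * ‖c - v‖) ≤ (inner ℝ (x - p) (c - v) : ℝ) := by
    have h6 := abs_real_inner_le_norm (x - p) (c - v)
    have h7 := neg_abs_le (inner ℝ (x - p) (c - v) : ℝ)
    linarith
  nlinarith [h2, h3, h4, h5]

lemma proj_nonexp {K : Set X} (hK : Convex ℝ K) {x p : X} (h : IsProjOn K x p)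
    {c : X} (hc : c ∈ K) : ‖p - c‖ ≤ ‖x - c‖ := by
  have := proj_key hK h hc c
  simp only [sub_self, norm_zero, mul_zero] at this
  nlinarith [norm_nonneg (p - c), norm_nonneg (x - c), sq_nonneg (‖x - p‖)]

lemma step_ineq {K₁ K₂ : Set X} (hK₁ : Convex ℝ K₁) (hK₂ : Convex ℝ K₂)
    {x p₁ p₂ z w y : X} (h₁ : IsProjOn K₁ x p₁) (h₂ : IsProjOn K₂ p₁ p₂)
    (hz : z ∈ K₁) (hw : w ∈ K₂) {ε : ℝ}
    (hzy : ‖z - y‖ ≤ ε) (hwy : ‖w - y‖ ≤ ε) :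
    ‖p₂ - y‖^2 ≤ ‖x - y‖^2 - ‖x - p₁‖^2/2 - ‖p₁ - p₂‖^2/2 + 4*ε^2
    ∧ ‖p₁ - y‖ ≤ ‖x - y‖ + 2*ε ∧ ‖p₂ - y‖ ≤ ‖x - y‖ + 4*ε := by
  have hε : 0 ≤ ε := le_trans (norm_nonneg _) hzy
  have k1 := proj_key hK₁ h₁ hz y
  have k2 := proj_key hK₂ h₂ hw y
  have s1 : (0:ℝ) ≤ ‖x - p₁‖ := norm_nonneg _
  have s2 : (0:ℝ) ≤ ‖p₁ - p₂‖ := norm_nonneg _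
  have d1 : ‖p₁ - y‖ ≤ ‖x - y‖ + 2*ε := by
    have hne := proj_nonexp hK₁ h₁ hz
    have t1 : ‖p₁ - y‖ ≤ ‖p₁ - z‖ + ‖z - y‖ := by
      have := norm_add_le (p₁ - z) (z - y); rwa [sub_add_sub_cancel] at this
    have t2 : ‖x - z‖ ≤ ‖x - y‖ + ‖y - z‖ := by
      have := norm_add_le (x - y) (y - z); rwa [sub_add_sub_cancel] at this
    have t3 : ‖y - z‖ = ‖z - y‖ := norm_sub_rev _ _
    linarith
  have d2 : ‖p₂ - y‖ ≤ ‖p₁ - y‖ + 2*ε := by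
    have hne := proj_nonexp hK₂ h₂ hw
    have t1 : ‖p₂ - y‖ ≤ ‖p₂ - w‖ + ‖w - y‖ := by
      have := norm_add_le (p₂ - w) (w - y); rwa [sub_add_sub_cancel] at this
    have t2 : ‖p₁ - w‖ ≤ ‖p₁ - y‖ + ‖y - w‖ := by
      have := norm_add_le (p₁ - y) (y - w); rwa [sub_add_sub_cancel] at this
    have t3 : ‖y - w‖ = ‖w - y‖ := norm_sub_rev _ _
    linarith
  refine ⟨?_, d1, by linarith⟩
  have hb1 : 2 * ‖x - p₁‖ * ‖z - y‖ ≤ ‖x - p₁‖^2/2 + 2*ε^2 := by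
    nlinarith [sq_nonneg (‖x - p₁‖ - 2*ε), mul_le_mul_of_nonneg_left hzy (by linarith : (0:ℝ) ≤ 2 * ‖x - p₁‖)]
  have hb2 : 2 * ‖p₁ - p₂‖ * ‖w - y‖ ≤ ‖p₁ - p₂‖^2/2 + 2*ε^2 := by
    nlinarith [sq_nonneg (‖p₁ - p₂‖ - 2*ε), mul_le_mul_of_nonneg_left hwy (by linarith : (0:ℝ) ≤ 2 * ‖p₁ - p₂‖)]
  nlinarith [k1, k2]

lemma slice_small {A : Set X} {y : X} [NormedSpace ℝ X] {f : X →L[ℝ] ℝ}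
    (hexp : StronglyExposes f A y) :
    ∀ η : ℝ, 0 < η → ∃ δ : ℝ, 0 < δ ∧ ∀ x ∈ A, f y - δ < f x → ‖x - y‖ < η := by
  intro η hη
  by_contra hcon
  push_neg at hcon
  choose g hg1 hg2 hg3 using fun k : ℕ =>
    hcon (1/((k:ℝ)+1)) (by positivity)
  have hten : Tendsto (fun k : ℕ => f (g k)) atTop (nhds (f y)) := by
    have hlow : Tendsto (fun k : ℕ => f y - 1/((k:ℝ)+1)) atTop (nhds (f y)) := by
      have h0 : Tendsto (fun _ : ℕ => f y) atTop (nhds (f y)) := tendsto_const_nhds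
      simpa using h0.sub tendsto_one_div_add_atTop_nhds_zero_nat
    refine tendsto_of_tendsto_of_tendsto_of_le_of_le hlow tendsto_const_nhds
      (fun k => le_of_lt (hg2 k)) (fun k => hexp.2.1 _ (hg1 k))
  have hlim := hexp.2.2 g hg1 hten
  obtain ⟨K, hK⟩ := (Metric.tendsto_atTop.1 hlim) η hη
  have := hK K le_rfl
  rw [dist_eq_norm] at this
  exact absurd this (not_lt.2 (hg3 K))
end Aux

section Cone
variable {X : Type*} [NormedAddCommGroup X] [NormedSpace ℝ X]
variable {A : Set X} {An : ℕ → Set X} {y : X} {f : X →L[ℝ] ℝ}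

-- f is 1-Lipschitz
lemma fLip (hf : ‖f‖ = 1) (u v : X) : f u - f v ≤ ‖u - v‖ := by
  have h1 : f u - f v = f (u - v) := (map_sub f u v).symm
  have h2 := f.le_opNorm (u - v)
  rw [hf, one_mul, Real.norm_eq_abs] at h2
  calc f u - f v = f (u - v) := h1
    _ ≤ |f (u - v)| := le_abs_self _
    _ ≤ ‖u - v‖ := h2

/-- Near points extraction: a point of `An n` in the ball of radius `N` is close to `A`. -/
lemma near_pt (hAne : A.Nonempty) {n N : ℕ} {ε : ℝ}
    (hacc : ∀ x : X, ‖x‖ ≤ (N : ℝ) → |Metric.infDist x (An n) - Metric.infDist x A| < ε)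
    {p : X} (hp : p ∈ An n) (hpN : ‖p‖ ≤ (N : ℝ)) : ∃ p' ∈ A, ‖p - p'‖ < ε := by
  have h := hacc p hpN
  rw [infDist_zero_of_mem hp] at h
  have h2 : infDist p A < ε := by
    have := abs_lt.1 h; linarith [this.1, this.2]
  obtain ⟨p', hp', hd⟩ := (infDist_lt_iff hAne).1 h2
  exact ⟨p', hp', by rwa [dist_eq_norm] at hd⟩

lemma near_y (hyL : y ∈ A) {n N : ℕ} {ε : ℝ} (hAnne : (An n).Nonempty)
    (hyN : ‖y‖ ≤ (N : ℝ))
    (hacc : ∀ x : X, ‖x‖ ≤ (N : ℝ) → |Metric.infDist x (An n) - Metric.infDist x A| < ε) :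
    ∃ q ∈ An n, ‖q - y‖ < ε := by
  have h := hacc y hyN
  rw [infDist_zero_of_mem hyL, sub_zero] at h
  have h2 : infDist y (An n) < ε := lt_of_le_of_lt (le_abs_self _) h
  obtain ⟨q, hq, hd⟩ := (infDist_lt_iff hAnne).1 h2
  exact ⟨q, hq, by rw [← dist_eq_norm, dist_comm]; exact hd⟩

set_option maxHeartbeats 1000000 in
/-- Cone bound for the A side. -/
lemma coneA (hf : ‖f‖ = 1) (hyA : y ∈ A) (hAne : A.Nonempty)
    (hAn : ∀ n, (An n).Nonempty ∧ IsClosed (An n) ∧ Convex ℝ (An n))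
    (hAW : AWTendsto An A)
    {δ₀ : ℝ} (hδ₀ : 0 < δ₀) (hδ₀1 : δ₀ ≤ 1)
    (hsl : ∀ x ∈ A, f y - δ₀ < f x → ‖x - y‖ < 1)
    (hsup : ∀ x ∈ A, f x ≤ f y) :
    ∃ n₁, ∀ n ≥ n₁, ∀ p ∈ An n, f p ≤ f y + 2 - δ₀/3 * ‖p - y‖ := by
  set ε : ℝ := δ₀/16 with hεdef
  have hε : 0 < ε := by positivity
  have hε1 : ε ≤ 1/16 := by rw [hεdef]; linarith
  set N : ℕ := ⌈‖y‖⌉₊ + 3 with hNdef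
  have hNy : ‖y‖ + 3 ≤ (N : ℝ) := by
    rw [hNdef]; push_cast; linarith [Nat.le_ceil ‖y‖]
  obtain ⟨n₁, hn₁⟩ := hAW N ε hε
  refine ⟨n₁, fun n hn p hp => ?_⟩
  have hacc := hn₁ n hn
  have hy0 : (0:ℝ) ≤ ‖y‖ := norm_nonneg y
  obtain ⟨q, hqmem, hqy⟩ := near_y hyA (hAn n).1 (by linarith) hacc
  have hqy' : ‖q - y‖ ≤ ε := le_of_lt hqy
  by_cases hcase : ‖p - y‖ ≤ 2
  · -- p is in the ball, use direct estimate
    have hpN : ‖p‖ ≤ (N : ℝ) := by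
      have := norm_add_le (p - y) y; rw [sub_add_cancel] at this; linarith
    obtain ⟨p', hp', hpd⟩ := near_pt hAne hacc hp hpN
    have := fLip hf p p'
    have hfp' := hsup p' hp'
    have h0 : (0:ℝ) ≤ ‖p - y‖ := norm_nonneg _
    have hP : δ₀ * ‖p - y‖ ≤ 2 := by nlinarith
    rw [hεdef] at hpd
    linarith
  · push_neg at hcase
    have hpq_ge : ‖p - y‖ - ‖q - y‖ ≤ ‖p - q‖ := by
      have := norm_add_le (p - q) (q - y); rw [sub_add_sub_cancel] at this; linarith
    have hpq_le : ‖p - q‖ ≤ ‖p - y‖ + ‖q - y‖ := by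
      have := norm_add_le (p - y) (y - q)
      rw [sub_add_sub_cancel] at this
      rw [show ‖y - q‖ = ‖q - y‖ from norm_sub_rev _ _] at this
      linarith
    have hpqpos : (3:ℝ)/2 < ‖p - q‖ := by linarith
    set t : ℝ := (3/2 - ‖q - y‖)/‖p - q‖ with htdef
    have ht0 : 0 < t := by
      apply div_pos; · linarith
      · linarith
    have htmul : t * ‖p - q‖ = 3/2 - ‖q - y‖ := by
      rw [htdef]; field_simp
    have ht1 : t ≤ 1 := by
      rw [htdef, div_le_one (by linarith)]; linarith [norm_nonneg (q - y)]
    set x : X := q + t • (p - q) with hxdef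
    have hxmem : x ∈ An n := by
      have hcvx := (hAn n).2.2
      have h := hcvx hqmem hp (by linarith : (0:ℝ) ≤ 1 - t) (le_of_lt ht0) (by ring)
      have : (1 - t) • q + t • p = x := by
        rw [hxdef]; rw [smul_sub]; module
      rwa [this] at h
    have hxy_eq : x - y = (q - y) + t • (p - q) := by rw [hxdef]; abel
    have htnorm : ‖t • (p - q)‖ = 3/2 - ‖q - y‖ := by
      rw [norm_smul, Real.norm_eq_abs, abs_of_pos ht0]; exact htmul
    have hxy1 : ‖x - y‖ ≤ 3/2 := by
      rw [hxy_eq]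
      have := norm_add_le (q - y) (t • (p - q))
      rw [htnorm] at this; linarith
    have hxy2 : 9/8 ≤ ‖x - y‖ := by
      have h1 : ‖t • (p - q)‖ ≤ ‖x - y‖ + ‖q - y‖ := by
        have h2 : t • (p - q) = (x - y) - (q - y) := by rw [hxy_eq]; abel
        rw [h2]
        have := norm_sub_le (x - y) (q - y); linarith
      rw [htnorm] at h1; linarith
    have hxN : ‖x‖ ≤ (N : ℝ) := by
      have := norm_add_le (x - y) y; rw [sub_add_cancel] at this; linarith
    obtain ⟨x', hx', hxd⟩ := near_pt hAne hacc hxmem hxN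
    have hx'far : ¬ (‖x' - y‖ < 1) := by
      push_neg
      have h1 : ‖x - y‖ ≤ ‖x - x'‖ + ‖x' - y‖ := by
        have := norm_add_le (x - x') (x' - y); rwa [sub_add_sub_cancel] at this
      linarith
    have hfx' : f x' ≤ f y - δ₀ := by
      by_contra hcc; push_neg at hcc
      exact hx'far (hsl x' hx' (by linarith))
    have hfx : f x ≤ f y - δ₀ + ε := by
      have := fLip hf x x'; linarith
    have hfq1 : f q ≤ f y + ε := by have := fLip hf q y; linarith
    have hfq2 : f y - ε ≤ f q := by
      have := fLip hf y q
      rw [show ‖y - q‖ = ‖q - y‖ from norm_sub_rev _ _] at this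
      linarith
    have hfxeq : f x = f q + t * (f p - f q) := by
      rw [hxdef]; rw [map_add, map_smul, map_sub]; simp [smul_eq_mul]
    have hε2 : ε ≤ δ₀/8 := by rw [hεdef]; linarith
    have hεδ : δ₀ * ε ≤ 1 := by
      rw [hεdef]
      nlinarith [mul_le_mul hδ₀1 hδ₀1 hδ₀.le zero_le_one]
    clear_value t x ε
    rw [hfxeq] at hfx
    have hkey : t * (f p - f q) ≤ -(3/4)*δ₀ := by linarith
    have hsign : f p - f q ≤ 0 := by
      by_contra hcc; push_neg at hcc
      nlinarith
    have hmul : (3/2 - ‖q - y‖) * (f p - f q) ≤ -(3/4)*δ₀ * ‖p - q‖ := by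
      have := mul_le_mul_of_nonneg_left hkey (by linarith : (0:ℝ) ≤ ‖p - q‖)
      calc (3/2 - ‖q - y‖) * (f p - f q) = ‖p - q‖ * (t * (f p - f q)) := by
            rw [← mul_assoc, mul_comm ‖p - q‖ t, htmul]
        _ ≤ ‖p - q‖ * (-(3/4)*δ₀) := this
        _ = -(3/4)*δ₀ * ‖p - q‖ := by ring
    have hmul2 : (3/2) * (f p - f q) ≤ -(3/4)*δ₀ * ‖p - q‖ := by
      nlinarith [norm_nonneg (q - y), hqy', hsign,
        mul_nonneg (norm_nonneg (q - y)) (neg_nonneg.2 hsign)]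
    have hfinal : f p ≤ f q - (1/2)*δ₀*‖p - q‖ := by linarith
    have h1 := mul_le_mul_of_nonneg_left
      (show ‖p - y‖ - ε ≤ ‖p - q‖ by linarith) hδ₀.le
    have h2 : 0 ≤ δ₀ * ‖p - y‖ := mul_nonneg hδ₀.le (norm_nonneg _)
    have h3 : 0 ≤ δ₀ * ‖p - q‖ := mul_nonneg hδ₀.le (norm_nonneg _)
    nlinarith [hfinal, hfq1, h1, h2, h3, hεδ, hε1, hε]
end Cone

section ConeB
variable {X : Type*} [NormedAddCommGroup X] [NormedSpace ℝ X]
variable {B : Set X} {Bn : ℕ → Set X} {y : X} {f : X →L[ℝ] ℝ}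

set_option maxHeartbeats 1000000 in
/-- Cone bound for the B side. -/
lemma coneB (hf : ‖f‖ = 1) (hyB : y ∈ B) (hBne : B.Nonempty)
    (hBn : ∀ n, (Bn n).Nonempty ∧ IsClosed (Bn n) ∧ Convex ℝ (Bn n))
    (hBW : AWTendsto Bn B)
    {ε : ℝ} (hε : 0 < ε) (hε1 : ε ≤ 1/16)
    (hinf : ∀ x ∈ B, f y ≤ f x) :
    ∃ n₂, ∀ n ≥ n₂, ∀ p ∈ Bn n, f y - 3*ε - 2*ε*‖p - y‖ ≤ f p := by
  set N : ℕ := ⌈‖y‖⌉₊ + 3 with hNdef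
  have hNy : ‖y‖ + 3 ≤ (N : ℝ) := by
    rw [hNdef]; push_cast; linarith [Nat.le_ceil ‖y‖]
  obtain ⟨n₂, hn₂⟩ := hBW N ε hε
  refine ⟨n₂, fun n hn p hp => ?_⟩
  have hacc := hn₂ n hn
  have hy0 : (0:ℝ) ≤ ‖y‖ := norm_nonneg y
  have hpy0 : (0:ℝ) ≤ ‖p - y‖ := norm_nonneg _
  obtain ⟨q, hqmem, hqy⟩ := near_y hyB (hBn n).1 (by linarith) hacc
  have hqy' : ‖q - y‖ ≤ ε := le_of_lt hqy
  have hfq1 : f q ≤ f y + ε := by have := fLip hf q y; linarith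
  have hfq2 : f y - ε ≤ f q := by
    have := fLip hf y q
    rw [show ‖y - q‖ = ‖q - y‖ from norm_sub_rev _ _] at this
    linarith
  by_cases hcase : ‖p - y‖ ≤ 2
  · have hpN : ‖p‖ ≤ (N : ℝ) := by
      have := norm_add_le (p - y) y; rw [sub_add_cancel] at this; linarith
    obtain ⟨p', hp', hpd⟩ := near_pt hBne hacc hp hpN
    have h1 : f p' - f p ≤ ‖p' - p‖ := fLip hf p' p
    rw [show ‖p' - p‖ = ‖p - p'‖ from norm_sub_rev _ _] at h1
    have hfp' := hinf p' hp'
    nlinarith [mul_nonneg hε.le hpy0]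
  · push_neg at hcase
    have hpq_ge : ‖p - y‖ - ‖q - y‖ ≤ ‖p - q‖ := by
      have := norm_add_le (p - q) (q - y); rw [sub_add_sub_cancel] at this; linarith
    have hpq_le : ‖p - q‖ ≤ ‖p - y‖ + ‖q - y‖ := by
      have := norm_add_le (p - y) (y - q)
      rw [sub_add_sub_cancel] at this
      rw [show ‖y - q‖ = ‖q - y‖ from norm_sub_rev _ _] at this
      linarith
    have hpqpos : (3:ℝ)/2 < ‖p - q‖ := by linarith
    set t : ℝ := (3/2 - ‖q - y‖)/‖p - q‖ with htdef
    have ht0 : 0 < t := by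
      apply div_pos; · linarith
      · linarith
    have htmul : t * ‖p - q‖ = 3/2 - ‖q - y‖ := by
      rw [htdef]; field_simp
    have ht1 : t ≤ 1 := by
      rw [htdef, div_le_one (by linarith)]; linarith [norm_nonneg (q - y)]
    set x : X := q + t • (p - q) with hxdef
    have hxmem : x ∈ Bn n := by
      have hcvx := (hBn n).2.2
      have h := hcvx hqmem hp (by linarith : (0:ℝ) ≤ 1 - t) (le_of_lt ht0) (by ring)
      have : (1 - t) • q + t • p = x := by
        rw [hxdef]; rw [smul_sub]; module
      rwa [this] at h
    have hxy_eq : x - y = (q - y) + t • (p - q) := by rw [hxdef]; abel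
    have htnorm : ‖t • (p - q)‖ = 3/2 - ‖q - y‖ := by
      rw [norm_smul, Real.norm_eq_abs, abs_of_pos ht0]; exact htmul
    have hxy1 : ‖x - y‖ ≤ 3/2 := by
      rw [hxy_eq]
      have := norm_add_le (q - y) (t • (p - q))
      rw [htnorm] at this; linarith
    have hxN : ‖x‖ ≤ (N : ℝ) := by
      have := norm_add_le (x - y) y; rw [sub_add_cancel] at this; linarith
    obtain ⟨x', hx', hxd⟩ := near_pt hBne hacc hxmem hxN
    have hfx : f y - ε ≤ f x := by
      have := fLip hf x' x
      rw [show ‖x' - x‖ = ‖x - x'‖ from norm_sub_rev _ _] at this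
      have := hinf x' hx'
      linarith
    have hfxeq : f x = f q + t * (f p - f q) := by
      rw [hxdef]; rw [map_add, map_smul, map_sub]; simp [smul_eq_mul]
    clear_value t x
    rw [hfxeq] at hfx
    have hkey : -(2*ε) ≤ t * (f p - f q) := by linarith
    rcases le_or_gt (f q) (f p) with hsign | hsign
    · nlinarith [mul_nonneg hε.le hpy0]
    · have hmul : -(2*ε) * ‖p - q‖ ≤ (3/2 - ‖q - y‖) * (f p - f q) := by
        have := mul_le_mul_of_nonneg_left hkey (by linarith : (0:ℝ) ≤ ‖p - q‖)
        calc -(2*ε) * ‖p - q‖ = ‖p - q‖ * -(2*ε) := by ring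
          _ ≤ ‖p - q‖ * (t * (f p - f q)) := this
          _ = (3/2 - ‖q - y‖) * (f p - f q) := by
              rw [← mul_assoc, mul_comm ‖p - q‖ t, htmul]
      have hmul2 : -(2*ε) * ‖p - q‖ ≤ f p - f q := by
        nlinarith [hqy', norm_nonneg (q - y), hsign]
      have h1 := mul_le_mul_of_nonneg_left hpq_le (by linarith : (0:ℝ) ≤ 2*ε)
      have h2 : ε * ε ≤ ε := by nlinarith
      nlinarith [hfq2, hmul2, h1, h2, mul_nonneg hε.le hpy0]
end ConeB


set_option maxHeartbeats 1000000 in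
theorem stmt0 {X : Type*} [NormedAddCommGroup X] [InnerProductSpace ℝ X] [CompleteSpace X]
    (A B : Set X) (hAne : A.Nonempty) (hAc : IsClosed A) (hAv : Convex ℝ A)
    (hBne : B.Nonempty) (hBc : IsClosed B) (hBv : Convex ℝ B)
    (An Bn : ℕ → Set X)
    (hAn : ∀ n, (An n).Nonempty ∧ IsClosed (An n) ∧ Convex ℝ (An n))
    (hBn : ∀ n, (Bn n).Nonempty ∧ IsClosed (Bn n) ∧ Convex ℝ (Bn n))
    (hAW : AWTendsto An A) (hBW : AWTendsto Bn B)
    (y : X) (hy : y ∈ A ∩ B) (f : X →L[ℝ] ℝ) (hf : ‖f‖ = 1)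
    (hinf : ∀ x ∈ B, f y ≤ f x) (hsup : ∀ x ∈ A, f x ≤ f y)
    (hexp : StronglyExposes f A y)
    (a₀ : X) (a b : ℕ → X) (hab : IsPerturbedAPS An Bn a₀ a b) :
    Tendsto a atTop (nhds y) ∧ Tendsto b atTop (nhds y) := by
  obtain ⟨hyA, hyB⟩ := hy
  have haA : ∀ n, 1 ≤ n → a n ∈ An n := by
    intro n hn
    obtain ⟨k, rfl⟩ : ∃ k, n = k + 1 := ⟨n - 1, by omega⟩
    exact (hab.2 k).2.1
  have hbB : ∀ n, 1 ≤ n → b n ∈ Bn n := by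
    intro n hn
    obtain ⟨k, rfl⟩ : ∃ k, n = k + 1 := ⟨n - 1, by omega⟩
    exact (hab.2 k).1.1
  -- slice parameter for the boundedness phase (η = 1)
  obtain ⟨δ₀, hδ₀pos, hδ₀1, hsl⟩ :
      ∃ d : ℝ, 0 < d ∧ d ≤ 1 ∧ ∀ x ∈ A, f y - d < f x → ‖x - y‖ < 1 := by
    obtain ⟨δ', hδ'pos, hsl'⟩ := slice_small hexp 1 one_pos
    exact ⟨min δ' 1, lt_min hδ'pos one_pos, min_le_right _ _,
      fun x hx h => hsl' x hx (by have := min_le_left δ' (1:ℝ); linarith)⟩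
  obtain ⟨nA, hcA⟩ := coneA hf hyA hAne hAn hAW hδ₀pos hδ₀1 hsl hsup
  have hεbpos : 0 < δ₀/48 := by positivity
  have hεb1 : δ₀/48 ≤ 1/16 := by linarith
  obtain ⟨nB, hcB⟩ := coneB hf hyB hBne hBn hBW hεbpos hεb1 hinf
  have hy0 : (0:ℝ) ≤ ‖y‖ := norm_nonneg y
  obtain ⟨N₀, hN₀y⟩ : ∃ N : ℕ, ‖y‖ + 3 ≤ (N : ℝ) :=
    ⟨⌈‖y‖⌉₊ + 3, by push_cast; linarith [Nat.le_ceil ‖y‖]⟩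
  obtain ⟨nzA, hzA⟩ := hAW N₀ (δ₀/48) hεbpos
  obtain ⟨nzB, hzB⟩ := hBW N₀ (δ₀/48) hεbpos
  obtain ⟨m₁, hm₁⟩ : ∃ m : ℕ, ∀ n, m ≤ n →
      nA ≤ n ∧ nB ≤ n + 1 ∧ nzA ≤ n + 1 ∧ nzB ≤ n + 1 ∧ 1 ≤ n :=
    ⟨nA + nB + nzA + nzB + 1, fun n hn => ⟨by omega, by omega, by omega, by omega, by omega⟩⟩
  -- boundedness step
  have hstep1 : ∀ n, m₁ ≤ n → ‖a (n+1) - y‖ ≤ max ‖a n - y‖ (24/δ₀ + 1) := by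
    intro n hn
    obtain ⟨hnA, hnB, hnzA, hnzB, h1n⟩ := hm₁ n hn
    obtain ⟨z, hz, hzy⟩ := near_y hyB (hBn (n+1)).1 (by linarith) (hzB (n+1) hnzB)
    obtain ⟨w, hw, hwy⟩ := near_y hyA (hAn (n+1)).1 (by linarith) (hzA (n+1) hnzA)
    obtain ⟨hm, hd1, hd2⟩ := step_ineq (hBn (n+1)).2.2 (hAn (n+1)).2.2
      (hab.2 n).1 (hab.2 n).2 hz hw hzy.le hwy.le
    rcases le_or_gt ‖a n - y‖ (24/δ₀) with hc | hc
    · refine le_trans ?_ (le_max_right _ _)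
      calc ‖a (n+1) - y‖ ≤ ‖a n - y‖ + 4*(δ₀/48) := hd2
        _ ≤ 24/δ₀ + 1 := by linarith
    · refine le_trans ?_ (le_max_left _ _)
      have hc' : 24 < ‖a n - y‖ * δ₀ := (div_lt_iff₀ hδ₀pos).1 hc
      have hfa := hcA n hnA (a n) (haA n h1n)
      have hfb := hcB (n+1) hnB (b (n+1)) (hbB (n+1) (by omega))
      have hlip := fLip hf (b (n+1)) (a n)
      rw [show ‖b (n+1) - a n‖ = ‖a n - b (n+1)‖ from norm_sub_rev _ _] at hlip
      have hmulδ := mul_le_mul_of_nonneg_left hd1 (le_of_lt hδ₀pos)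
      have hδsq : δ₀ * δ₀ ≤ 1 := by nlinarith
      have hs1 : 1 ≤ ‖a n - b (n+1)‖ := by
        linarith [hfa, hfb, hc', hδ₀pos, hδ₀1, hlip, hmulδ, hδsq]
      have hsq1 : (1:ℝ) ≤ ‖a n - b (n+1)‖^2 := by nlinarith [hs1]
      have hd2' : ‖a (n+1) - y‖^2 ≤ ‖a n - y‖^2 - 1/2 + 4*(δ₀/48)^2 := by
        linarith [hm, hsq1, sq_nonneg ‖b (n+1) - a (n+1)‖]
      have hd2'' : ‖a (n+1) - y‖^2 ≤ ‖a n - y‖^2 := by nlinarith [hd2', hδsq]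
      nlinarith [norm_nonneg (a (n+1) - y), norm_nonneg (a n - y), hd2'']
  -- boundedness
  obtain ⟨M₀, hM₀1, hM₀2⟩ : ∃ M : ℝ, ‖a m₁ - y‖ ≤ M ∧ 24/δ₀ + 1 ≤ M :=
    ⟨max ‖a m₁ - y‖ (24/δ₀ + 1), le_max_left _ _, le_max_right _ _⟩
  have hM₀0 : 0 ≤ M₀ := le_trans (norm_nonneg _) hM₀1
  have hbound : ∀ n, m₁ ≤ n → ‖a n - y‖ ≤ M₀ := by
    intro n hn
    induction n, hn using Nat.le_induction with
    | base => exact hM₀1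
    | succ n hmn ih => exact le_trans (hstep1 n hmn) (max_le ih hM₀2)
  -- convergence phase
  have hkey2 : ∀ η : ℝ, 0 < η → η ≤ 1 → ∃ m, ∀ n, m ≤ n → ‖a n - y‖ ≤ η := by
    intro η hη hη1
    obtain ⟨δ, hδpos, hδη, hsl2⟩ :
        ∃ d : ℝ, 0 < d ∧ d ≤ η ∧ ∀ x ∈ A, f y - d < f x → ‖x - y‖ < η/2 := by
      obtain ⟨δ'', hδ''pos, hsl2'⟩ := slice_small hexp (η/2) (by positivity)
      exact ⟨min δ'' η, lt_min hδ''pos hη, min_le_right _ _,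
        fun x hx h => hsl2' x hx (by have := min_le_left δ'' η; linarith)⟩
    have hδ1 : δ ≤ 1 := le_trans hδη hη1
    obtain ⟨ε2, hε2pos, hε2δ, hε2η⟩ :
        ∃ e : ℝ, 0 < e ∧ e ≤ δ/16 ∧ e ≤ η/16 :=
      ⟨min (δ/16) (η/16), lt_min (by positivity) (by positivity),
        min_le_left _ _, min_le_right _ _⟩
    obtain ⟨N₂, hN₂⟩ : ∃ N : ℕ, M₀ + ‖y‖ + 2 ≤ (N:ℝ) :=
      ⟨⌈M₀ + ‖y‖⌉₊ + 2, by push_cast; linarith [Nat.le_ceil (M₀ + ‖y‖)]⟩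
    obtain ⟨na2, hna2⟩ := hAW N₂ ε2 hε2pos
    obtain ⟨nb2, hnb2⟩ := hBW N₂ ε2 hε2pos
    have hyN₂ : ‖y‖ ≤ (N₂:ℝ) := by linarith
    obtain ⟨m₂, hm₂0, hm₂⟩ : ∃ m : ℕ, m₁ ≤ m ∧ ∀ n, m ≤ n →
        m₁ ≤ n ∧ na2 ≤ n ∧ nb2 ≤ n + 1 ∧ 1 ≤ n :=
      ⟨m₁ + na2 + nb2 + 1, by omega,
        fun n hn => ⟨by omega, by omega, by omega, by omega⟩⟩
    have hstep2 : ∀ n, m₂ ≤ n →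
        (3*η/4 < ‖a n - y‖ → ‖a (n+1) - y‖^2 ≤ ‖a n - y‖^2 - δ^2/16)
        ∧ ‖a (n+1) - y‖ ≤ ‖a n - y‖ + 4*ε2 := by
      intro n hn
      obtain ⟨hm₁n, hna2n, hnb2n, h1n⟩ := hm₂ n hn
      obtain ⟨z, hz, hzy⟩ := near_y hyB (hBn (n+1)).1 hyN₂ (hnb2 (n+1) hnb2n)
      obtain ⟨w, hw, hwy⟩ := near_y hyA (hAn (n+1)).1 hyN₂
        (hna2 (n+1) (le_trans hna2n (Nat.le_succ _)))
      obtain ⟨hm, hd1, hd2⟩ := step_ineq (hBn (n+1)).2.2 (hAn (n+1)).2.2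
        (hab.2 n).1 (hab.2 n).2 hz hw hzy.le hwy.le
      refine ⟨?_, hd2⟩
      intro hfar
      have hdn : ‖a n - y‖ ≤ M₀ := hbound n hm₁n
      have haN : ‖a n‖ ≤ (N₂:ℝ) := by
        have := norm_add_le (a n - y) y; rw [sub_add_cancel] at this; linarith
      obtain ⟨a', ha', had⟩ := near_pt hAne (hna2 n hna2n) (haA n h1n) haN
      have ha'far : ¬ ‖a' - y‖ < η/2 := by
        push_neg
        have htr : ‖a n - y‖ ≤ ‖a n - a'‖ + ‖a' - y‖ := by
          have := norm_add_le (a n - a') (a' - y); rwa [sub_add_sub_cancel] at this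
        have h16 : ε2 ≤ η/16 := hε2η
        linarith
      have hfa' : f a' ≤ f y - δ := by
        by_contra hcc; push_neg at hcc
        exact ha'far (hsl2 a' ha' hcc)
      have hfa : f (a n) ≤ f y - δ + ε2 := by
        have := fLip hf (a n) a'; linarith
      have hbyn : ‖b (n+1) - y‖ ≤ M₀ + 2 := by
        have h2 : ε2 ≤ 1 := by linarith
        linarith
      have hbN : ‖b (n+1)‖ ≤ (N₂:ℝ) := by
        have := norm_add_le (b (n+1) - y) y; rw [sub_add_cancel] at this; linarith
      obtain ⟨b', hb', hbd⟩ := near_pt hBne (hnb2 (n+1) hnb2n) (hbB (n+1) (by omega)) hbN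
      have hfb : f y - ε2 ≤ f (b (n+1)) := by
        have h3 := fLip hf b' (b (n+1))
        rw [show ‖b' - b (n+1)‖ = ‖b (n+1) - b'‖ from norm_sub_rev _ _] at h3
        have := hinf b' hb'
        linarith
      have hs1 : δ/2 ≤ ‖a n - b (n+1)‖ := by
        have hlip := fLip hf (b (n+1)) (a n)
        rw [show ‖b (n+1) - a n‖ = ‖a n - b (n+1)‖ from norm_sub_rev _ _] at hlip
        linarith
      have hsq1 : δ^2/4 ≤ ‖a n - b (n+1)‖^2 := by nlinarith [hs1, hδpos]
      have hε2sq : ε2^2 ≤ δ^2/256 := by nlinarith [hε2δ, hε2pos]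
      have hδsq2 : 0 ≤ δ^2 := sq_nonneg δ
      linarith [hm, hsq1, hε2sq, sq_nonneg ‖b (n+1) - a (n+1)‖, hδsq2]
    have hdesc : ∃ n₃, m₂ ≤ n₃ ∧ ‖a n₃ - y‖ ≤ 3*η/4 := by
      by_contra hcon; push_neg at hcon
      have hdec : ∀ k : ℕ, ‖a (m₂ + k) - y‖^2 ≤ ‖a m₂ - y‖^2 - k*(δ^2/16) := by
        intro k
        induction k with
        | zero => simp
        | succ k ih =>
          have h1 := (hstep2 (m₂ + k) (Nat.le_add_right _ _)).1
            (hcon (m₂+k) (Nat.le_add_right _ _))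
          have he : m₂ + (k+1) = (m₂ + k) + 1 := by omega
          rw [he]; push_cast; linarith [h1, ih]
      obtain ⟨k, hk⟩ := exists_nat_gt (‖a m₂ - y‖^2 / (δ^2/16))
      have h2 := hdec k
      have h3 : ‖a m₂ - y‖^2 < (k:ℝ)*(δ^2/16) := by
        rw [div_lt_iff₀ (by positivity)] at hk; linarith
      linarith [sq_nonneg ‖a (m₂ + k) - y‖, h2, h3]
    obtain ⟨n₃, hn₃m, hn₃⟩ := hdesc
    refine ⟨n₃, fun n hn => ?_⟩
    induction n, hn using Nat.le_induction with
    | base => linarith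
    | succ n hmn ih =>
      have hs := hstep2 n (le_trans hn₃m hmn)
      rcases le_or_gt ‖a n - y‖ (3*η/4) with hc | hc
      · calc ‖a (n+1) - y‖ ≤ ‖a n - y‖ + 4*ε2 := hs.2
          _ ≤ η := by linarith
      · have h1 := hs.1 hc
        have h2 : ‖a (n+1) - y‖^2 ≤ η^2 := by
          nlinarith [h1, ih, norm_nonneg (a n - y), hδpos]
        nlinarith [h2, norm_nonneg (a (n+1) - y), hη.le]
  -- assemble: a → y
  have hta : Tendsto a atTop (nhds y) := by
    rw [Metric.tendsto_atTop]
    intro ε hε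
    obtain ⟨m, hm⟩ := hkey2 (min (ε/2) 1) (lt_min (by positivity) one_pos) (min_le_right _ _)
    refine ⟨m, fun n hn => ?_⟩
    have h1 := hm n hn
    have h2 : min (ε/2) 1 ≤ ε/2 := min_le_left _ _
    rw [dist_eq_norm]
    linarith
  refine ⟨hta, ?_⟩
  rw [Metric.tendsto_atTop]
  intro ε hε
  obtain ⟨nz, hnz⟩ := hBW (⌈‖y‖⌉₊ + 1) (ε/8) (by positivity)
  obtain ⟨m, hm⟩ := Metric.tendsto_atTop.1 hta (ε/4) (by positivity)
  refine ⟨max nz m + 1, fun n hn => ?_⟩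
  obtain ⟨k, rfl⟩ : ∃ k, n = k + 1 := ⟨n - 1, by omega⟩
  have hk1 : nz ≤ k + 1 := by
    have := le_max_left nz m; omega
  have hk2 : m ≤ k := by
    have := le_max_right nz m; omega
  have hyN : ‖y‖ ≤ ((⌈‖y‖⌉₊ + 1 : ℕ) : ℝ) := by
    push_cast; linarith [Nat.le_ceil ‖y‖]
  obtain ⟨z, hz, hzy⟩ := near_y hyB (hBn (k+1)).1 hyN (hnz (k+1) hk1)
  have h1 : dist (a k) (b (k+1)) ≤ dist (a k) z := (hab.2 k).1.2 z hz
  have h2 : dist (a k) z ≤ dist (a k) y + dist y z := dist_triangle _ _ _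
  have h3 : dist (b (k+1)) y ≤ dist (b (k+1)) (a k) + dist (a k) y := dist_triangle _ _ _
  have h4 : dist (b (k+1)) (a k) = dist (a k) (b (k+1)) := dist_comm _ _
  have h5 : dist y z = ‖z - y‖ := by rw [dist_eq_norm, norm_sub_rev]
  have h6 := hm k hk2
  calc dist (b (k+1)) y ≤ dist (b (k+1)) (a k) + dist (a k) y := h3
    _ = dist (a k) (b (k+1)) + dist (a k) y := by rw [h4]
    _ ≤ (dist (a k) y + dist y z) + dist (a k) y := by linarith
    _ < ε := by rw [h5] at *; linarith [hzy]
end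

section
/- Let X be a real Hilbert space, B a nonempty closed convex subset of X, A a body in X (a closed convex set with nonempty interior), and y ∈ ∂A an LUR point of A. Let {A_n} and {B_n} be sequences of nonempty closed convex subsets of X such that A_n → A and B_n → B in the Attouch-Wets sense, and suppose A ∩ B = {y}. Then for every starting point a₀ ∈ X, the perturbed alternating projections sequences {a_n} and {b_n} (w.r.t. {A_n} and {B_n}, with starting point a₀) converge in norm to y. -/
open Filter Metric Topology

/-- `x` is an LUR (locally uniformly rotund) point of the body `A`:
for each `ε > 0` there is `δ > 0` such that `y ∈ A` and
`dist((x+y)/2, ∂A) < δ` imply `‖x − y‖ < ε`. -/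
def IsLURPoint {X : Type*} [NormedAddCommGroup X] [NormedSpace ℝ X]
    (A : Set X) (x : X) : Prop :=
  ∀ ε : ℝ, 0 < ε → ∃ δ : ℝ, 0 < δ ∧ ∀ y ∈ A,
    Metric.infDist ((2 : ℝ)⁻¹ • (x + y)) (frontier A) < δ → ‖x - y‖ < ε


open RealInnerProductSpace

section Helpers

lemma sqle {a b : ℝ} (h : a^2 ≤ b^2) (hb : 0 ≤ b) : a ≤ b := by
  nlinarith [sq_nonneg (a - b), sq_nonneg (a + b)]

lemma projOn_inner_le {X : Type*} [NormedAddCommGroup X] [InnerProductSpace ℝ X]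
    {K : Set X} (hK : Convex ℝ K) {x p : X} (h : IsProjOn K x p) {z : X} (hz : z ∈ K) :
    ⟪x - p, z - p⟫ ≤ 0 := by
  by_contra hi
  push_neg at hi
  have hzp0 : z ≠ p := by
    rintro rfl
    rw [sub_self, inner_zero_right] at hi
    exact lt_irrefl 0 hi
  have hzp : ‖z - p‖ ^ 2 > 0 :=
    pow_pos (norm_pos_iff.mpr (sub_ne_zero.mpr hzp0)) 2
  set i := ⟪x - p, z - p⟫ with hidef
  set θ : ℝ := min 1 (i / ‖z - p‖ ^ 2) with hθdef
  have hθpos : 0 < θ := lt_min one_pos (by positivity)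
  have hθ1 : θ ≤ 1 := min_le_left _ _
  have hθi : θ * ‖z - p‖ ^ 2 ≤ i := by
    have := min_le_right 1 (i / ‖z - p‖ ^ 2)
    calc θ * ‖z - p‖ ^ 2 ≤ (i / ‖z - p‖ ^ 2) * ‖z - p‖ ^ 2 := by nlinarith
    _ = i := by rw [div_mul_cancel₀ _ hzp.ne']
  have hw : (1 - θ) • p + θ • z ∈ K := hK h.1 hz (by linarith) hθpos.le (by ring)
  have hle := h.2 _ hw
  rw [dist_eq_norm, dist_eq_norm] at hle
  have hxw : x - ((1 - θ) • p + θ • z) = (x - p) - θ • (z - p) := by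
    rw [smul_sub, sub_smul, one_smul]; abel
  rw [hxw] at hle
  have hexp : ‖(x - p) - θ • (z - p)‖ ^ 2
      = ‖x - p‖ ^ 2 - 2 * (θ * i) + θ ^ 2 * ‖z - p‖ ^ 2 := by
    rw [norm_sub_sq_real, real_inner_smul_right, norm_smul]
    rw [Real.norm_eq_abs, abs_of_pos hθpos]
    ring
  have hsq : ‖x - p‖ ^ 2 ≤ ‖(x - p) - θ • (z - p)‖ ^ 2 := by
    have h0 : (0:ℝ) ≤ ‖(x - p) - θ • (z - p)‖ := norm_nonneg _
    nlinarith [norm_nonneg (x - p)]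
  nlinarith [hθi, hθpos, hi]

lemma projOn_firm {X : Type*} [NormedAddCommGroup X] [InnerProductSpace ℝ X]
    {K : Set X} (hK : Convex ℝ K) {x p : X} (h : IsProjOn K x p) {z : X} (hz : z ∈ K) :
    ‖z - p‖ ^ 2 + ‖x - p‖ ^ 2 ≤ ‖x - z‖ ^ 2 := by
  have hin := projOn_inner_le hK h hz
  have : x - z = (x - p) - (z - p) := by abel
  rw [this, norm_sub_sq_real (x - p) (z - p)]
  nlinarith

lemma aw_near {X : Type*} [NormedAddCommGroup X] {An : ℕ → Set X} {L : Set X}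
    (h : AWTendsto An L) (hne : ∀ n, (An n).Nonempty) {y : X} (hy : y ∈ L)
    {ε : ℝ} (hε : 0 < ε) : ∃ m, ∀ n ≥ m, ∃ p ∈ An n, dist y p < ε := by
  obtain ⟨m, hm⟩ := h ⌈‖y‖⌉₊ ε hε
  refine ⟨m, fun n hn => ?_⟩
  have := hm n hn y (Nat.le_ceil _)
  rw [Metric.infDist_zero_of_mem hy, sub_zero] at this
  have h2 : Metric.infDist y (An n) < ε := lt_of_abs_lt this
  exact (Metric.infDist_lt_iff (hne n)).mp h2

lemma aw_approx {X : Type*} [NormedAddCommGroup X] {An : ℕ → Set X} {L : Set X}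
    (h : AWTendsto An L) (hLne : L.Nonempty) (N : ℕ)
    {ε : ℝ} (hε : 0 < ε) :
    ∃ m, ∀ n ≥ m, ∀ z ∈ An n, ‖z‖ ≤ (N : ℝ) → ∃ x' ∈ L, dist z x' < ε := by
  obtain ⟨m, hm⟩ := h N ε hε
  refine ⟨m, fun n hn z hz hzN => ?_⟩
  have := hm n hn z hzN
  rw [Metric.infDist_zero_of_mem hz, zero_sub, abs_neg] at this
  have h2 : Metric.infDist z L < ε := lt_of_abs_lt this
  exact (Metric.infDist_lt_iff hLne).mp h2

lemma sep_package {X : Type*} [NormedAddCommGroup X] [InnerProductSpace ℝ X] [CompleteSpace X]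
    (B : Set X) (hBv : Convex ℝ B)
    (A : Set X) (hAc : IsClosed A) (hAv : Convex ℝ A) (hAint : (interior A).Nonempty)
    (y : X) (hyB : y ∈ B) (hyA' : y ∈ A)
    (hdisj : Disjoint (interior A) B) :
    ∃ (w : X) (u : ℝ), 0 < ‖w‖ ∧ (∀ x ∈ A, ⟪w, x⟫ ≤ u) ∧ (∀ x ∈ B, u ≤ ⟪w, x⟫) ∧
      ⟪w, y⟫ = u ∧ (∀ m ∈ A, ‖w‖ * Metric.infDist m (frontier A) ≤ u - ⟪w, m⟫) := by
  obtain ⟨f, u, hfo, hfB⟩ :=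
    geometric_hahn_banach_open hAv.interior isOpen_interior hBv hdisj
  obtain ⟨a', ha'⟩ := hAint
  -- f ≤ u on A
  have hfA : ∀ x ∈ A, f x ≤ u := by
    intro x hx
    have key : ∀ n : ℕ, f x + (1/(n+1 : ℝ)) * (f a' - f x) ≤ u := by
      intro n
      have hpos : (0:ℝ) < 1/(n+1:ℝ) := by positivity
      have ht : (1/(n+1:ℝ)) ∈ Set.Ioc (0:ℝ) 1 := by
        constructor
        · exact hpos
        · rw [div_le_one (by positivity)]
          have : (0:ℝ) ≤ (n:ℝ) := Nat.cast_nonneg n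
          linarith
      have hz := hAv.add_smul_sub_mem_interior hx ha' ht
      have hlt := (hfo _ hz).le
      have heq : f (x + (1/(n+1:ℝ)) • (a' - x)) = f x + (1/(n+1:ℝ)) * (f a' - f x) := by
        rw [map_add, map_smul, map_sub]; simp [smul_eq_mul]
      rw [heq] at hlt
      exact hlt
    have hlim : Filter.Tendsto (fun n : ℕ => f x + (1/(n+1:ℝ)) * (f a' - f x))
        Filter.atTop (nhds (f x + 0 * (f a' - f x))) := by
      exact tendsto_const_nhds.add
        ((tendsto_one_div_add_atTop_nhds_zero_nat).mul_const _)
    have := le_of_tendsto hlim (Filter.Eventually.of_forall key)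
    simpa using this
  have hfy : f y = u := le_antisymm (hfA y hyA') (hfB y hyB)
  set w : X := (InnerProductSpace.toDual ℝ X).symm f with hwdef
  have hw : ∀ x : X, ⟪w, x⟫ = f x := fun x => InnerProductSpace.toDual_symm_apply
  have h1 : f a' < u := hfo a' ha'
  have h2 : w ≠ 0 := by
    intro h0
    have hy0 : f y = 0 := by rw [← hw y, h0, inner_zero_left]
    have ha0 : f a' = 0 := by rw [← hw a', h0, inner_zero_left]
    have hu0 : u = 0 := by rw [← hfy, hy0]
    rw [ha0, hu0] at h1
    exact lt_irrefl 0 h1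
  have hwn : 0 < ‖w‖ := norm_pos_iff.mpr h2
  -- the slab lemma
  have hslab : ∀ m ∈ A, ‖w‖ * Metric.infDist m (frontier A) ≤ u - ⟪w, m⟫ := by
    intro m hm
    have hum : 0 ≤ u - f m := sub_nonneg.mpr (hfA m hm)
    set r := Metric.infDist m (frontier A) with hrdef
    rcases le_or_gt r 0 with hr | hr
    · rw [hw]
      have : ‖w‖ * r ≤ 0 := mul_nonpos_of_nonneg_of_nonpos hwn.le hr
      linarith
    · -- ball m r ⊆ interior A
      have hnf : ∀ z ∈ Metric.ball m r, z ∉ frontier A := by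
        intro z hz hzf
        have h3 : r ≤ dist m z := Metric.infDist_le_dist_of_mem hzf
        rw [Metric.mem_ball, dist_comm] at hz
        linarith
      have hmint : m ∈ interior A := by
        by_contra hni
        have hmf : m ∈ frontier A := ⟨subset_closure hm, hni⟩
        have : r = 0 := Metric.infDist_zero_of_mem hmf
        linarith
      have hball : Metric.ball m r ⊆ interior A := by
        apply IsPreconnected.subset_left_of_subset_union
          isOpen_interior (isOpen_interior (s := Aᶜ))
          (Set.disjoint_left.mpr fun {z} hz1 hz2 => (interior_subset hz2 : z ∈ Aᶜ) (interior_subset hz1))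
          ?_ ⟨m, Metric.mem_ball_self hr, hmint⟩ (convex_ball m r).isPreconnected
        intro z hz
        by_cases hzi : z ∈ interior A
        · exact Set.mem_union_left _ hzi
        · right
          rw [interior_compl]
          intro hzc
          exact hnf z hz ⟨hzc, hzi⟩
      -- key : ∀ v, ‖v‖ < r → f v ≤ u - f m
      have hkey : ∀ v : X, ‖v‖ < r → f v ≤ u - f m := by
        intro v hv
        have : m + v ∈ Metric.ball m r := by
          rw [Metric.mem_ball, dist_eq_norm]
          simpa using hv
        have := hfA _ (interior_subset (hball this))
        rw [map_add] at this
        linarith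
      -- conclude
      rw [hw]
      by_contra hcon
      push_neg at hcon
      set r' := (u - f m) / ‖w‖ with hr'def
      have hr'lt : r' < r := by
        rw [hr'def, div_lt_iff₀ hwn]
        linarith [hcon]
      have hr'0 : 0 ≤ r' := div_nonneg hum hwn.le
      set r'' := (r' + r) / 2 with hr''def
      have h4 : r' < r'' := by rw [hr''def]; linarith
      have h5 : r'' < r := by rw [hr''def]; linarith
      have h6 : 0 ≤ r'' := by linarith
      have hnv : ‖(r'' / ‖w‖) • w‖ = r'' := by
        rw [norm_smul, Real.norm_eq_abs, abs_of_nonneg (by positivity), div_mul_cancel₀]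
        exact hwn.ne'
      have := hkey _ (by rw [hnv]; exact h5)
      rw [← hw, real_inner_smul_right, real_inner_self_eq_norm_sq] at this
      have h7 : r'' / ‖w‖ * ‖w‖ ^ 2 = r'' * ‖w‖ := by
        field_simp
      rw [h7] at this
      have h8 : r' * ‖w‖ = u - f m := by
        rw [hr'def, div_mul_cancel₀ _ hwn.ne']
      nlinarith [h4, hwn]
  refine ⟨w, u, hwn, ?_, ?_, by rw [hw]; exact hfy, hslab⟩
  · intro x hx; rw [hw]; exact hfA x hx
  · intro x hx; rw [hw]; exact hfB x hx

set_option maxHeartbeats 1000000 in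
lemma coneA_s1 {X : Type*} [NormedAddCommGroup X] [InnerProductSpace ℝ X]
    {An : ℕ → Set X} {A : Set X} (hAW : AWTendsto An A)
    (hAn : ∀ n, (An n).Nonempty ∧ IsClosed (An n) ∧ Convex ℝ (An n))
    {y w : X} {u c β δ₁ : ℝ} (hy : y ∈ A)
    (hc : 0 < c) (hδ₁ : 0 < δ₁) (hδ₁' : δ₁ ≤ 1) (hβ : β = c * δ₁)
    (hwy : ⟪w, y⟫ = u)
    (hLip : ∀ x z : X, ⟪w, x⟫ - ⟪w, z⟫ ≤ c * ‖x - z‖)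
    (hFar : ∀ x ∈ A, 1 ≤ ‖x - y‖ → ⟪w, x⟫ ≤ u - β) :
    ∃ n₁, ∀ n ≥ n₁, ∀ z ∈ An n, 3 ≤ ‖z - y‖ →
      ⟪w, z⟫ ≤ u - β / 4 * (‖z - y‖ - 2) := by
  have hβpos : 0 < β := by rw [hβ]; positivity
  set ε₁ : ℝ := δ₁ / 4 with hε₁def
  have hε₁pos : 0 < ε₁ := by positivity
  have hε₁le : ε₁ ≤ 1/4 := by rw [hε₁def]; linarith
  have hcε₁ : c * ε₁ = β / 4 := by rw [hε₁def, hβ]; ring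
  set N₁ : ℕ := ⌈‖y‖ + 3⌉₊ with hN₁def
  have hN₁ : ‖y‖ + 3 ≤ (N₁ : ℝ) := Nat.le_ceil _
  obtain ⟨n₁, hn₁⟩ := hAW N₁ ε₁ hε₁pos
  refine ⟨n₁, fun n hn z hz hz3 => ?_⟩
  -- near point p in An n
  have hyN : ‖y‖ ≤ (N₁ : ℝ) := by linarith [norm_nonneg y]
  have hpy' := hn₁ n hn y hyN
  rw [Metric.infDist_zero_of_mem hy, sub_zero] at hpy'
  obtain ⟨p, hpA, hpd⟩ := (Metric.infDist_lt_iff (hAn n).1).mp (lt_of_abs_lt hpy')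
  have hpy : ‖p - y‖ < ε₁ := by rw [← dist_eq_norm, dist_comm]; exact hpd
  have hzy_zp : ‖z - y‖ ≤ ‖z - p‖ + ‖p - y‖ := norm_sub_le_norm_sub_add_norm_sub z p y
  have hd2 : 2 ≤ ‖z - p‖ := by linarith
  set d := ‖z - p‖ with hddef
  have hdpos : 0 < d := by linarith
  set t : ℝ := 2 / d with htdef
  have htpos : 0 < t := by positivity
  have ht1 : t ≤ 1 := by rw [htdef, div_le_one hdpos]; linarith
  set xt := (1 - t) • p + t • z with hxtdef
  have hxtA : xt ∈ An n := (hAn n).2.2 hpA hz (by linarith) htpos.le (by ring)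
  have hxtp : ‖xt - p‖ = 2 := by
    have h1 : xt - p = t • (z - p) := by rw [hxtdef]; module
    rw [h1, norm_smul, Real.norm_eq_abs, abs_of_pos htpos, htdef]
    field_simp
    exact hddef.symm
  have hxty_ub : ‖xt - y‖ ≤ 2 + ε₁ := by
    calc ‖xt - y‖ ≤ ‖xt - p‖ + ‖p - y‖ := norm_sub_le_norm_sub_add_norm_sub xt p y
    _ ≤ 2 + ε₁ := by rw [hxtp]; linarith
  have hxty_lb : 2 - ε₁ ≤ ‖xt - y‖ := by
    have : ‖xt - p‖ ≤ ‖xt - y‖ + ‖y - p‖ := norm_sub_le_norm_sub_add_norm_sub xt y p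
    rw [hxtp] at this
    have : ‖y - p‖ = ‖p - y‖ := norm_sub_rev y p
    linarith [norm_sub_le_norm_sub_add_norm_sub xt y p, hxtp]
  have hxtN : ‖xt‖ ≤ (N₁ : ℝ) := by
    have h0 : ‖xt - y + y‖ ≤ ‖xt - y‖ + ‖y‖ := norm_add_le _ _
    rw [sub_add_cancel] at h0
    linarith
  -- approximate xt by a point of A
  have hxtd := hn₁ n hn xt hxtN
  rw [Metric.infDist_zero_of_mem hxtA, zero_sub, abs_neg] at hxtd
  obtain ⟨x', hx'A, hx'd⟩ := (Metric.infDist_lt_iff ⟨y, hy⟩).mp (lt_of_abs_lt hxtd)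
  have hx'dn : ‖xt - x'‖ ≤ ε₁ := by rw [← dist_eq_norm]; exact hx'd.le
  have hx'far : 1 ≤ ‖x' - y‖ := by
    have h1 : ‖xt - y‖ ≤ ‖xt - x'‖ + ‖x' - y‖ := norm_sub_le_norm_sub_add_norm_sub xt x' y
    linarith
  have h6 := hFar x' hx'A hx'far
  have hfxt : ⟪w, xt⟫ ≤ u - β + c * ε₁ := by
    have h9 : c * ‖xt - x'‖ ≤ c * ε₁ := mul_le_mul_of_nonneg_left hx'dn hc.le
    linarith [hLip xt x']
  have hfp_lb : u - c * ε₁ ≤ ⟪w, p⟫ := by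
    have h8 : ‖y - p‖ ≤ ε₁ := by rw [← dist_eq_norm]; exact hpd.le
    have h9 : c * ‖y - p‖ ≤ c * ε₁ := mul_le_mul_of_nonneg_left h8 hc.le
    linarith [hLip y p, hwy]
  have hfp_ub : ⟪w, p⟫ ≤ u + c * ε₁ := by
    have h9 : c * ‖p - y‖ ≤ c * ε₁ := mul_le_mul_of_nonneg_left hpy.le hc.le
    linarith [hLip p y, hwy]
  have hfxteq : ⟪w, xt⟫ = (1 - t) * ⟪w, p⟫ + t * ⟪w, z⟫ := by
    rw [hxtdef, inner_add_right, real_inner_smul_right, real_inner_smul_right]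
  have hid : t * (⟪w, z⟫ - ⟪w, p⟫) = ⟪w, xt⟫ - ⟪w, p⟫ := by rw [hfxteq]; ring
  have hstep : t * (⟪w, z⟫ - ⟪w, p⟫) ≤ -(β / 2) := by
    rw [hid]; linarith [hfxt, hfp_lb, hcε₁]
  have hdiv : ⟪w, z⟫ - ⟪w, p⟫ ≤ -(β / 4) * d := by
    have h9 := mul_le_mul_of_nonneg_right hstep (by positivity : (0:ℝ) ≤ d / 2)
    have h10 : t * (⟪w, z⟫ - ⟪w, p⟫) * (d / 2) = ⟪w, z⟫ - ⟪w, p⟫ := by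
      rw [htdef]; field_simp
    rw [h10] at h9
    nlinarith
  have hdzy : ‖z - y‖ - 1/4 ≤ d := by linarith
  have h11 : β/4 * (‖z - y‖ - 1/4) ≤ β/4 * d :=
    mul_le_mul_of_nonneg_left hdzy (by positivity)
  have h12 : β/4 * (‖z - y‖ - 1/4) = β/4 * (‖z - y‖ - 2) + β * (7/16) := by ring
  linarith [h11, hdiv, hfp_ub, hcε₁, hβpos, h12]

set_option maxHeartbeats 1000000 in
lemma coneB_s1 {X : Type*} [NormedAddCommGroup X] [InnerProductSpace ℝ X]
    {Bn : ℕ → Set X} {B : Set X} (hBW : AWTendsto Bn B)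
    (hBn : ∀ n, (Bn n).Nonempty ∧ IsClosed (Bn n) ∧ Convex ℝ (Bn n))
    {y w : X} {u c ε₂ : ℝ} (hy : y ∈ B)
    (hc : 0 < c) (hε₂ : 0 < ε₂) (hε₂1 : ε₂ ≤ 1)
    (hwy : ⟪w, y⟫ = u)
    (hLip : ∀ x z : X, ⟪w, x⟫ - ⟪w, z⟫ ≤ c * ‖x - z‖)
    (hB : ∀ x ∈ B, u ≤ ⟪w, x⟫) :
    ∃ n₂, ∀ n ≥ n₂, ∀ z ∈ Bn n, u - c * ε₂ * (2 * ‖z - y‖ + 4) ≤ ⟪w, z⟫ := by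
  have hcε : 0 < c * ε₂ := by positivity
  set N₂ : ℕ := ⌈‖y‖ + 3⌉₊ with hN₂def
  have hN₂ : ‖y‖ + 3 ≤ (N₂ : ℝ) := Nat.le_ceil _
  obtain ⟨n₂, hn₂⟩ := hBW N₂ ε₂ hε₂
  refine ⟨n₂, fun n hn z hz => ?_⟩
  have hG0 : 0 ≤ ‖z - y‖ := norm_nonneg _
  -- near point q
  have hyN : ‖y‖ ≤ (N₂ : ℝ) := by linarith [norm_nonneg y]
  have hqy' := hn₂ n hn y hyN
  rw [Metric.infDist_zero_of_mem hy, sub_zero] at hqy'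
  obtain ⟨q, hqB, hqd⟩ := (Metric.infDist_lt_iff (hBn n).1).mp (lt_of_abs_lt hqy')
  have hqy : ‖q - y‖ < ε₂ := by rw [← dist_eq_norm, dist_comm]; exact hqd
  have hfq_lb : u - c * ε₂ ≤ ⟪w, q⟫ := by
    have h8 : ‖y - q‖ ≤ ε₂ := by rw [← dist_eq_norm]; exact hqd.le
    have h9 : c * ‖y - q‖ ≤ c * ε₂ := mul_le_mul_of_nonneg_left h8 hc.le
    linarith [hLip y q, hwy]
  have hfq_ub : ⟪w, q⟫ ≤ u + c * ε₂ := by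
    have h9 : c * ‖q - y‖ ≤ c * ε₂ := mul_le_mul_of_nonneg_left hqy.le hc.le
    linarith [hLip q y, hwy]
  rcases le_or_gt ‖z - q‖ 2 with hd2 | hd2
  · -- near case
    have hzN : ‖z‖ ≤ (N₂ : ℝ) := by
      have h0 : ‖z - q + (q - y) + y‖ ≤ ‖z - q‖ + ‖q - y‖ + ‖y‖ := norm_add₃_le
      have h1 : z - q + (q - y) + y = z := by abel
      rw [h1] at h0
      linarith
    have hzd := hn₂ n hn z hzN
    rw [Metric.infDist_zero_of_mem hz, zero_sub, abs_neg] at hzd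
    obtain ⟨z', hz'B, hz'd⟩ := (Metric.infDist_lt_iff ⟨y, hy⟩).mp (lt_of_abs_lt hzd)
    have hz'n : ‖z' - z‖ ≤ ε₂ := by rw [← dist_eq_norm, dist_comm]; exact hz'd.le
    have h9 : c * ‖z' - z‖ ≤ c * ε₂ := mul_le_mul_of_nonneg_left hz'n hc.le
    have h10 : c * ε₂ * 1 ≤ c * ε₂ * (2 * ‖z - y‖ + 4) :=
      mul_le_mul_of_nonneg_left (by linarith) hcε.le
    linarith [hLip z' z, hB z' hz'B]
  · -- far case
    set d := ‖z - q‖ with hddef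
    have hdpos : 0 < d := by linarith
    set t : ℝ := 2 / d with htdef
    have htpos : 0 < t := by positivity
    have ht1 : t ≤ 1 := by rw [htdef, div_le_one hdpos]; linarith
    set xt := (1 - t) • q + t • z with hxtdef
    have hxtB : xt ∈ Bn n := (hBn n).2.2 hqB hz (by linarith) htpos.le (by ring)
    have hxtq : ‖xt - q‖ = 2 := by
      have h1 : xt - q = t • (z - q) := by rw [hxtdef]; module
      rw [h1, norm_smul, Real.norm_eq_abs, abs_of_pos htpos, htdef]
      field_simp
      exact hddef.symm
    have hxtN : ‖xt‖ ≤ (N₂ : ℝ) := by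
      have h0 : ‖xt - q + (q - y) + y‖ ≤ ‖xt - q‖ + ‖q - y‖ + ‖y‖ := norm_add₃_le
      have h1 : xt - q + (q - y) + y = xt := by abel
      rw [h1, hxtq] at h0
      linarith
    have hxtd := hn₂ n hn xt hxtN
    rw [Metric.infDist_zero_of_mem hxtB, zero_sub, abs_neg] at hxtd
    obtain ⟨z', hz'B, hz'd⟩ := (Metric.infDist_lt_iff ⟨y, hy⟩).mp (lt_of_abs_lt hxtd)
    have hz'n : ‖z' - xt‖ ≤ ε₂ := by rw [← dist_eq_norm, dist_comm]; exact hz'd.le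
    have hfxt : u - c * ε₂ ≤ ⟪w, xt⟫ := by
      have h9 : c * ‖z' - xt‖ ≤ c * ε₂ := mul_le_mul_of_nonneg_left hz'n hc.le
      linarith [hLip z' xt, hB z' hz'B]
    have hfxteq : ⟪w, xt⟫ = (1 - t) * ⟪w, q⟫ + t * ⟪w, z⟫ := by
      rw [hxtdef, inner_add_right, real_inner_smul_right, real_inner_smul_right]
    have hid : t * (⟪w, z⟫ - ⟪w, q⟫) = ⟪w, xt⟫ - ⟪w, q⟫ := by rw [hfxteq]; ring
    have hstep : -(2 * (c * ε₂)) ≤ t * (⟪w, z⟫ - ⟪w, q⟫) := by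
      rw [hid]; linarith [hfxt, hfq_ub]
    have hdiv : -(c * ε₂) * d ≤ ⟪w, z⟫ - ⟪w, q⟫ := by
      have h9 := mul_le_mul_of_nonneg_right hstep (by positivity : (0:ℝ) ≤ d / 2)
      have h10 : t * (⟪w, z⟫ - ⟪w, q⟫) * (d / 2) = ⟪w, z⟫ - ⟪w, q⟫ := by
        rw [htdef]; field_simp
      rw [h10] at h9
      nlinarith
    have hdzy : d ≤ ‖z - y‖ + 1 := by
      have h1 : ‖z - q‖ ≤ ‖z - y‖ + ‖y - q‖ := norm_sub_le_norm_sub_add_norm_sub z y q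
      have h2 : ‖y - q‖ = ‖q - y‖ := norm_sub_rev y q
      linarith [hqy.le]
    have h11 : c * ε₂ * d ≤ c * ε₂ * (‖z - y‖ + 1) := mul_le_mul_of_nonneg_left hdzy hcε.le
    have h12 : c * ε₂ * (‖z - y‖ + 1) + c * ε₂ ≤ c * ε₂ * (2 * ‖z - y‖ + 4) := by nlinarith
    nlinarith [hdiv, hfq_lb, h11, h12]

set_option maxHeartbeats 1000000 in
lemma contract_step {X : Type*} [NormedAddCommGroup X] [InnerProductSpace ℝ X]
    {KA KB : Set X} (hKAv : Convex ℝ KA) (hKBv : Convex ℝ KB)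
    {an bb a' y w p q : X} {u c δ₁ : ℝ}
    (hc : 0 < c) (hδ₁ : 0 < δ₁) (hδ₁1 : δ₁ ≤ 1)
    (hprojB : IsProjOn KB an bb) (hprojA : IsProjOn KA bb a')
    (hLip : ∀ x z : X, ⟪w, x⟫ - ⟪w, z⟫ ≤ c * ‖x - z‖)
    (hcA : ∀ z ∈ KA, 3 ≤ ‖z - y‖ → ⟪w, z⟫ ≤ u - (c * δ₁) / 4 * (‖z - y‖ - 2))
    (hcB : ∀ z ∈ KB, u - c * (δ₁/64) * (2 * ‖z - y‖ + 4) ≤ ⟪w, z⟫)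
    (hp : p ∈ KA) (hpy : ‖p - y‖ ≤ 1)
    (hq : q ∈ KB) (hqy : ‖q - y‖ ≤ δ₁/64) :
    ‖a' - y‖ ≤ (1 - (δ₁/8)^2/16) * ‖an - y‖ + 4 := by
  set β := c * δ₁ with hβdef
  have hβpos : 0 < β := by positivity
  set lam : ℝ := δ₁/8 with hlamdef
  have hlam : 0 < lam := by positivity
  have hlam8 : lam ≤ 1/8 := by rw [hlamdef]; linarith
  set θ : ℝ := 1 - lam^2/16 with hθdef
  have hlamsq : lam^2 ≤ 1/64 := by nlinarith
  have hθ14 : (1:ℝ)/4 ≤ θ := by rw [hθdef]; nlinarith [sq_nonneg lam]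
  have hθ1 : θ ≤ 1 := by rw [hθdef]; nlinarith [sq_nonneg lam]
  clear_value β lam θ
  have hr0 : 0 ≤ ‖an - y‖ := norm_nonneg _
  have hr'0 : 0 ≤ ‖a' - y‖ := norm_nonneg _
  have hub0 : 0 ≤ ‖bb - y‖ := norm_nonneg _
  -- ub ≤ r + 2*(δ₁/64) ≤ r + 1
  have firmB := projOn_firm hKBv hprojB hq
  have hanq : ‖an - q‖ ≤ ‖an - y‖ + δ₁/64 := by
    have h1 : ‖an - q‖ ≤ ‖an - y‖ + ‖y - q‖ := norm_sub_le_norm_sub_add_norm_sub an y q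
    have h2 : ‖y - q‖ = ‖q - y‖ := norm_sub_rev y q
    linarith
  have hbbq : ‖bb - q‖ ≤ ‖an - y‖ + δ₁/64 := by
    have h1 : ‖q - bb‖ ^ 2 ≤ ‖an - q‖ ^ 2 := by
      nlinarith [firmB, sq_nonneg ‖an - bb‖]
    have h2 : ‖q - bb‖ ≤ ‖an - q‖ := sqle h1 (norm_nonneg _)
    have h3 : ‖bb - q‖ = ‖q - bb‖ := norm_sub_rev bb q
    linarith
  have hub : ‖bb - y‖ ≤ ‖an - y‖ + 2 * (δ₁/64) := by
    have h1 : ‖bb - y‖ ≤ ‖bb - q‖ + ‖q - y‖ := norm_sub_le_norm_sub_add_norm_sub bb q y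
    linarith
  have hub1 : ‖bb - y‖ ≤ ‖an - y‖ + 1 := by linarith
  rcases le_or_gt ‖a' - y‖ 3 with h3 | h3
  · have h4 : 0 ≤ θ * ‖an - y‖ := mul_nonneg (by linarith) hr0
    linarith
  -- far case
  have hfa := hcA a' hprojA.1 (by linarith)
  have hfb := hcB bb hprojB.1
  have hLt := hLip bb a'
  have ht0 : 0 ≤ ‖bb - a'‖ := norm_nonneg _
  rcases le_or_gt (c * (δ₁/64) * (2 * ‖bb - y‖ + 4)) (β/8 * (‖a' - y‖ - 2)) with hB1 | hB2
  · -- subcase B1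
    have hct : c * (lam * (‖a' - y‖ - 2)) ≤ c * ‖bb - a'‖ := by
      have h5 : β/4 * (‖a' - y‖ - 2) - β/8 * (‖a' - y‖ - 2) = β/8 * (‖a' - y‖ - 2) := by ring
      have h6 : β/8 * (‖a' - y‖ - 2) ≤ c * ‖bb - a'‖ := by linarith [hLt, hfa, hfb, hB1]
      have h7 : c * (lam * (‖a' - y‖ - 2)) = β/8 * (‖a' - y‖ - 2) := by
        rw [hlamdef, hβdef]; ring
      linarith
    have htlam : lam * (‖a' - y‖ - 2) ≤ ‖bb - a'‖ := le_of_mul_le_mul_left hct hc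
    have firmA := projOn_firm hKAv hprojA hp
    have hpa : ‖a' - y‖ - 1 ≤ ‖p - a'‖ := by
      have h1 : ‖a' - y‖ ≤ ‖a' - p‖ + ‖p - y‖ := norm_sub_le_norm_sub_add_norm_sub a' p y
      have h2 : ‖a' - p‖ = ‖p - a'‖ := norm_sub_rev a' p
      linarith
    have hbp : ‖bb - p‖ ≤ ‖bb - y‖ + 1 := by
      have h1 : ‖bb - p‖ ≤ ‖bb - y‖ + ‖y - p‖ := norm_sub_le_norm_sub_add_norm_sub bb y p
      have h2 : ‖y - p‖ = ‖p - y‖ := norm_sub_rev y p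
      linarith
    have hsq1 : (‖a' - y‖ - 1)^2 ≤ ‖p - a'‖^2 := pow_le_pow_left₀ (by linarith) hpa 2
    have hsq2 : (lam * (‖a' - y‖ - 2))^2 ≤ ‖bb - a'‖^2 :=
      pow_le_pow_left₀ (mul_nonneg hlam.le (by linarith)) htlam 2
    have hsq3 : ‖bb - p‖^2 ≤ (‖bb - y‖ + 1)^2 := pow_le_pow_left₀ (norm_nonneg _) hbp 2
    have e1 : (‖a' - y‖ - 1)/2 ≤ ‖a' - y‖ - 2 := by linarith
    have e2 : (0:ℝ) ≤ (‖a' - y‖ - 1)/2 := by linarith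
    have e3 : ((‖a' - y‖ - 1)/2)^2 ≤ (‖a' - y‖ - 2)^2 := pow_le_pow_left₀ e2 e1 2
    have e4 : lam^2 * ((‖a' - y‖ - 1)/2)^2 ≤ lam^2 * (‖a' - y‖ - 2)^2 :=
      mul_le_mul_of_nonneg_left e3 (sq_nonneg lam)
    have hkey : (1 + lam^2/4) * (‖a' - y‖ - 1)^2 ≤ (‖bb - y‖ + 1)^2 := by
      calc (1 + lam^2/4) * (‖a' - y‖ - 1)^2 = (‖a' - y‖ - 1)^2 + lam^2 * ((‖a' - y‖ - 1)/2)^2 := by ring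
      _ ≤ (‖a' - y‖ - 1)^2 + lam^2 * (‖a' - y‖ - 2)^2 := by linarith
      _ = (‖a' - y‖ - 1)^2 + (lam * (‖a' - y‖ - 2))^2 := by ring
      _ ≤ ‖p - a'‖^2 + ‖bb - a'‖^2 := by linarith
      _ ≤ ‖bb - p‖^2 := firmA
      _ ≤ (‖bb - y‖ + 1)^2 := hsq3
    have hx : lam^2 ≤ 1 := by nlinarith
    have e6 : lam^4 ≤ lam^2 := by nlinarith [sq_nonneg lam]
    have e7 : (0:ℝ) ≤ lam^6 := by positivity
    have hθsq : 1 ≤ θ^2 * (1 + lam^2/4) := by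
      have eid : θ^2 * (1 + lam^2/4) - 1 = lam^2/8 - 7*lam^4/256 + lam^6/1024 := by
        rw [hθdef]; ring
      linarith
    have e8 : θ^2 * ((1 + lam^2/4) * (‖a' - y‖ - 1)^2) ≤ θ^2 * (‖bb - y‖ + 1)^2 :=
      mul_le_mul_of_nonneg_left hkey (sq_nonneg θ)
    have e9 : (‖a' - y‖ - 1)^2 * 1 ≤ (‖a' - y‖ - 1)^2 * (θ^2 * (1 + lam^2/4)) :=
      mul_le_mul_of_nonneg_left hθsq (sq_nonneg _)
    rw [mul_one] at e9
    have e10 : (‖a' - y‖ - 1)^2 * (θ^2 * (1 + lam^2/4)) = θ^2 * ((1 + lam^2/4) * (‖a' - y‖ - 1)^2) := by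
      ring
    have e11 : (θ * (‖bb - y‖ + 1))^2 = θ^2 * (‖bb - y‖ + 1)^2 := by ring
    have hfin : (‖a' - y‖ - 1)^2 ≤ (θ * (‖bb - y‖ + 1))^2 := by linarith
    have hfin2 := sqle hfin (mul_nonneg (by linarith) (by linarith))
    have m2 : θ * (‖bb - y‖ + 1) = θ * ‖bb - y‖ + θ := by ring
    have m3 : θ * ‖bb - y‖ ≤ θ * (‖an - y‖ + 1) := mul_le_mul_of_nonneg_left hub1 (by linarith)
    have m1 : θ * (‖an - y‖ + 1) = θ * ‖an - y‖ + θ := by ring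
    linarith
  · -- subcase B2
    have h5 : (c * δ₁) * ((‖a' - y‖ - 2)/8) < (c * δ₁) * ((2 * ‖bb - y‖ + 4)/64) := by
      calc (c * δ₁) * ((‖a' - y‖ - 2)/8) = β/8 * (‖a' - y‖ - 2) := by rw [hβdef]; ring
      _ < c * (δ₁/64) * (2 * ‖bb - y‖ + 4) := hB2
      _ = (c * δ₁) * ((2 * ‖bb - y‖ + 4)/64) := by ring
    have h6 : (‖a' - y‖ - 2)/8 ≤ (2 * ‖bb - y‖ + 4)/64 := le_of_mul_le_mul_left h5.le (by positivity)
    have h7 : (1/4) * ‖an - y‖ ≤ θ * ‖an - y‖ := mul_le_mul_of_nonneg_right hθ14 hr0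
    linarith

set_option maxHeartbeats 1000000 in
lemma key_step {X : Type*} [NormedAddCommGroup X] [InnerProductSpace ℝ X]
    {KA KB : Set X} (hKAv : Convex ℝ KA) (hKBv : Convex ℝ KB)
    {an bb a' y p q : X} {R ε₃ : ℝ}
    (hprojB : IsProjOn KB an bb) (hprojA : IsProjOn KA bb a')
    (hp : p ∈ KA) (hpy : ‖p - y‖ ≤ ε₃)
    (hq : q ∈ KB) (hqy : ‖q - y‖ ≤ ε₃)
    (hε₃ : 0 < ε₃) (hε₃1 : ε₃ ≤ 1)
    (hr : ‖an - y‖ ≤ R) (hR : 0 < R) :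
    ‖a' - y‖^2 ≤ ‖an - y‖^2 - ‖an - bb‖^2 - ‖bb - a'‖^2 + ε₃ * (8*R + 16)
    ∧ ‖a' - y‖ ≤ ‖an - y‖ + 4 * ε₃ ∧ ‖bb - y‖ ≤ ‖an - y‖ + 2 * ε₃ := by
  have firmB := projOn_firm hKBv hprojB hq
  have firmA := projOn_firm hKAv hprojA hp
  have hqbb : ‖q - bb‖ = ‖bb - q‖ := norm_sub_rev q bb
  rw [hqbb] at firmB
  have hpa : ‖p - a'‖ = ‖a' - p‖ := norm_sub_rev p a'
  rw [hpa] at firmA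
  have hanq : ‖an - q‖ ≤ ‖an - y‖ + ε₃ := by
    have h1 : ‖an - q‖ ≤ ‖an - y‖ + ‖y - q‖ := norm_sub_le_norm_sub_add_norm_sub an y q
    have h2 : ‖y - q‖ = ‖q - y‖ := norm_sub_rev y q
    linarith
  have hbbq : ‖bb - q‖ ≤ ‖an - q‖ := by
    refine sqle ?_ (norm_nonneg _)
    nlinarith [firmB, sq_nonneg ‖an - bb‖]
  have hbbqR : ‖bb - q‖ ≤ R + 1 := by linarith
  have hbp : ‖bb - p‖ ≤ ‖bb - q‖ + 2 * ε₃ := by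
    have h1 : ‖bb - p‖ ≤ ‖bb - q‖ + ‖q - p‖ := norm_sub_le_norm_sub_add_norm_sub bb q p
    have h2 : ‖q - p‖ ≤ ‖q - y‖ + ‖y - p‖ := norm_sub_le_norm_sub_add_norm_sub q y p
    have h3 : ‖y - p‖ = ‖p - y‖ := norm_sub_rev y p
    linarith
  have hbpR : ‖bb - p‖ ≤ R + 3 := by linarith
  have hap : ‖a' - p‖ ≤ ‖bb - p‖ := by
    refine sqle ?_ (norm_nonneg _)
    nlinarith [firmA, sq_nonneg ‖bb - a'‖]
  have hapR : ‖a' - p‖ ≤ R + 3 := by linarith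
  have hay : ‖a' - y‖ ≤ ‖a' - p‖ + ε₃ := by
    have h1 : ‖a' - y‖ ≤ ‖a' - p‖ + ‖p - y‖ := norm_sub_le_norm_sub_add_norm_sub a' p y
    linarith
  refine ⟨?_, ?_, ?_⟩
  · -- squared chain
    have sA : ‖a' - y‖^2 ≤ (‖a' - p‖ + ε₃)^2 :=
      pow_le_pow_left₀ (norm_nonneg _) hay 2
    have sA' : (‖a' - p‖ + ε₃)^2 ≤ ‖a' - p‖^2 + ε₃ * (2*R + 7) := by
      have h1 : ε₃ * ‖a' - p‖ ≤ ε₃ * (R + 3) := mul_le_mul_of_nonneg_left hapR hε₃.le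
      nlinarith [hε₃.le, hε₃1]
    have sC : ‖bb - p‖^2 ≤ (‖bb - q‖ + 2*ε₃)^2 :=
      pow_le_pow_left₀ (norm_nonneg _) hbp 2
    have sC' : (‖bb - q‖ + 2*ε₃)^2 ≤ ‖bb - q‖^2 + ε₃ * (4*R + 8) := by
      have h1 : ε₃ * ‖bb - q‖ ≤ ε₃ * (R + 1) := mul_le_mul_of_nonneg_left hbbqR hε₃.le
      nlinarith [hε₃.le, hε₃1]
    have sE : ‖an - q‖^2 ≤ (‖an - y‖ + ε₃)^2 :=
      pow_le_pow_left₀ (norm_nonneg _) hanq 2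
    have sE' : (‖an - y‖ + ε₃)^2 ≤ ‖an - y‖^2 + ε₃ * (2*R + 1) := by
      have h1 : ε₃ * ‖an - y‖ ≤ ε₃ * R := mul_le_mul_of_nonneg_left hr hε₃.le
      nlinarith [hε₃.le, hε₃1]
    nlinarith [sA, sA', firmA, sC, sC', firmB, sE, sE']
  · calc ‖a' - y‖ ≤ ‖a' - p‖ + ε₃ := hay
    _ ≤ ‖bb - p‖ + ε₃ := by linarith
    _ ≤ ‖bb - q‖ + 3 * ε₃ := by linarith
    _ ≤ ‖an - q‖ + 3 * ε₃ := by linarith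
    _ ≤ ‖an - y‖ + 4 * ε₃ := by linarith
  · have h1 : ‖bb - y‖ ≤ ‖bb - q‖ + ‖q - y‖ := norm_sub_le_norm_sub_add_norm_sub bb q y
    linarith

end Helpers

set_option maxHeartbeats 4000000

theorem stmt1 {X : Type*} [NormedAddCommGroup X] [InnerProductSpace ℝ X] [CompleteSpace X]
    (B : Set X) (hBne : B.Nonempty) (hBc : IsClosed B) (hBv : Convex ℝ B)
    (A : Set X) (hAc : IsClosed A) (hAv : Convex ℝ A) (hAint : (interior A).Nonempty)
    (y : X) (hyA : y ∈ frontier A) (hyLUR : IsLURPoint A y)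
    (An Bn : ℕ → Set X)
    (hAn : ∀ n, (An n).Nonempty ∧ IsClosed (An n) ∧ Convex ℝ (An n))
    (hBn : ∀ n, (Bn n).Nonempty ∧ IsClosed (Bn n) ∧ Convex ℝ (Bn n))
    (hAW : AWTendsto An A) (hBW : AWTendsto Bn B)
    (hAB : A ∩ B = {y})
    (a₀ : X) (a b : ℕ → X) (hab : IsPerturbedAPS An Bn a₀ a b) :
    Filter.Tendsto a Filter.atTop (nhds y) ∧ Filter.Tendsto b Filter.atTop (nhds y) := by
  classical
  -- basic membership facts
  have hyAB : y ∈ A ∩ B := by rw [hAB]; rfl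
  have hyA' : y ∈ A := hyAB.1
  have hyB : y ∈ B := hyAB.2
  have hyNI : y ∉ interior A := fun h => hyA.2 h
  have hdisj : Disjoint (interior A) B := by
    rw [Set.disjoint_left]
    intro z hz1 hz2
    have hz : z ∈ A ∩ B := ⟨interior_subset hz1, hz2⟩
    rw [hAB] at hz
    rw [hz] at hz1
    exact hyNI hz1
  obtain ⟨w, u, hwn, hfA, hfB, hfy, hslab⟩ :=
    sep_package B hBv A hAc hAv hAint y hyB hyA' hdisj
  have hLip : ∀ x z : X, ⟪w, x⟫ - ⟪w, z⟫ ≤ ‖w‖ * ‖x - z‖ := by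
    intro x z
    have h1 : ⟪w, x⟫ - ⟪w, z⟫ = ⟪w, x - z⟫ := (inner_sub_right w x z).symm
    rw [h1]
    exact real_inner_le_norm w (x - z)
  -- LUR property in linear-functional form
  have hLUR' : ∀ ε : ℝ, 0 < ε → ∃ δ : ℝ, 0 < δ ∧
      ∀ x ∈ A, u - ⟪w, x⟫ < ‖w‖ * δ → ‖y - x‖ < ε := by
    intro ε hε
    obtain ⟨δL, hδL, hδ⟩ := hyLUR ε hε
    refine ⟨δL, hδL, fun x hx hu => ?_⟩
    have hm : (2:ℝ)⁻¹ • (y + x) ∈ A := by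
      have h2 := hAv hyA' hx (by norm_num) (by norm_num)
        (by norm_num : (2:ℝ)⁻¹ + (2:ℝ)⁻¹ = 1)
      rw [smul_add]
      exact h2
    have hfm : ⟪w, (2:ℝ)⁻¹ • (y + x)⟫ = 2⁻¹ * (u + ⟪w, x⟫) := by
      rw [real_inner_smul_right, inner_add_right, hfy]
    have hs := hslab _ hm
    rw [hfm] at hs
    apply hδ x hx
    have h2 : ‖w‖ * Metric.infDist ((2:ℝ)⁻¹ • (y + x)) (frontier A) < ‖w‖ * δL := by
      have h3 : u - 2⁻¹ * (u + ⟪w, x⟫) = (u - ⟪w, x⟫) / 2 := by ring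
      rw [h3] at hs
      nlinarith [hwn, hδL]
    exact lt_of_mul_lt_mul_left h2 hwn.le
  obtain ⟨δ₁', hδ₁'pos, hδ₁'⟩ := hLUR' 1 one_pos
  set δ₁ : ℝ := min δ₁' 1 with hδ₁def
  have hδ₁pos : 0 < δ₁ := lt_min hδ₁'pos one_pos
  have hδ₁1 : δ₁ ≤ 1 := min_le_right _ _
  have hFar : ∀ x ∈ A, 1 ≤ ‖x - y‖ → ⟪w, x⟫ ≤ u - ‖w‖ * δ₁ := by
    intro x hx h1
    by_contra hcon
    push_neg at hcon
    have h2 : ‖w‖ * δ₁ ≤ ‖w‖ * δ₁' :=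
      mul_le_mul_of_nonneg_left (min_le_left _ _) hwn.le
    have h3 := hδ₁' x hx (by linarith)
    rw [norm_sub_rev] at h3
    linarith
  -- cone bounds
  obtain ⟨n₁, hcA⟩ := coneA_s1 hAW hAn hyA' hwn hδ₁pos hδ₁1 rfl hfy hLip hFar
  obtain ⟨n₂, hcB⟩ := coneB_s1 (ε₂ := δ₁/64) hBW hBn hyB hwn (by positivity)
    (by linarith) hfy hLip hfB
  -- near points
  obtain ⟨n₅, hnear₁⟩ := aw_near hAW (fun n => (hAn n).1) hyA' one_pos
  obtain ⟨n₆, hnear₂⟩ := aw_near hBW (fun n => (hBn n).1) hyB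
    (show (0:ℝ) < δ₁/64 by positivity)
  set θ : ℝ := 1 - (δ₁/8)^2/16 with hθdef
  have hθ0 : 0 < θ := by rw [hθdef]; nlinarith [hδ₁pos, hδ₁1]
  have hθ1 : θ < 1 := by rw [hθdef]; nlinarith [hδ₁pos]
  set n₃ : ℕ := max (max n₁ n₂) (max n₅ n₆) with hn₃def
  have hn₃1 : n₁ ≤ n₃ := le_trans (le_max_left _ _) (le_max_left _ _)
  have hn₃2 : n₂ ≤ n₃ := le_trans (le_max_right _ _) (le_max_left _ _)
  have hn₃5 : n₅ ≤ n₃ := le_trans (le_max_left _ _) (le_max_right _ _)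
  have hn₃6 : n₆ ≤ n₃ := le_trans (le_max_right _ _) (le_max_right _ _)
  clear_value n₃
  -- one-step contraction
  have hstep : ∀ n, n₃ ≤ n → ‖a (n+1) - y‖ ≤ θ * ‖a n - y‖ + 4 := by
    intro n hn
    have hn1 : n₁ ≤ n + 1 := by omega
    have hn2 : n₂ ≤ n + 1 := by omega
    have hn5 : n₅ ≤ n + 1 := by omega
    have hn6 : n₆ ≤ n + 1 := by omega
    obtain ⟨p, hpA, hpd⟩ := hnear₁ (n+1) hn5
    obtain ⟨q, hqB, hqd⟩ := hnear₂ (n+1) hn6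
    have hpy : ‖p - y‖ ≤ 1 := by
      rw [← dist_eq_norm, dist_comm]; exact hpd.le
    have hqy : ‖q - y‖ ≤ δ₁/64 := by
      rw [← dist_eq_norm, dist_comm]; exact hqd.le
    exact contract_step (hAn (n+1)).2.2 (hBn (n+1)).2.2 hwn hδ₁pos hδ₁1
      (hab.2 n).1 (hab.2 n).2 hLip (hcA (n+1) hn1) (hcB (n+1) hn2)
      hpA hpy hqB hqy
  -- boundedness
  have h1θ : 0 < 1 - θ := by
    have he : 1 - θ = (δ₁/8)^2/16 := by rw [hθdef]; ring
    rw [he]; positivity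
  clear_value θ
  set R : ℝ := max (‖a n₃ - y‖) (4/(1-θ) + 4) with hRdef
  have hR4 : 4/(1-θ) + 4 ≤ R := le_max_right _ _
  have hbase : ‖a n₃ - y‖ ≤ R := le_max_left _ _
  have hRpos : 0 < R := by
    have h5 : (0:ℝ) < 4/(1-θ) := by positivity
    linarith
  clear_value R
  have hbound : ∀ n, n₃ ≤ n → ‖a n - y‖ ≤ R := by
    intro n hn
    induction n, hn using Nat.le_induction with
    | base => exact hbase
    | succ n hn ih =>
      have h1 := hstep n hn
      have h2 : θ * ‖a n - y‖ ≤ θ * R := mul_le_mul_of_nonneg_left ih hθ0.le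
      have h3 : 4/(1-θ) * (1-θ) = 4 := by
        field_simp
      have h4 : (4/(1-θ) + 4) * (1-θ) ≤ R * (1-θ) :=
        mul_le_mul_of_nonneg_right hR4 (by linarith)
      nlinarith
  -- main convergence estimate
  have hconv : ∀ ε : ℝ, 0 < ε → ∃ m : ℕ, ∀ n, m ≤ n → ‖a n - y‖ ≤ 3 * ε := by
    intro ε hε
    obtain ⟨δ, hδpos, hδprop⟩ := hLUR' ε hε
    set ε₃ : ℝ := min (min 1 (ε/3)) (min (δ/9) (δ^2/(64*(R+2)))) with hε₃def
    have hε₃pos : 0 < ε₃ := by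
      refine lt_min (lt_min one_pos (by positivity)) (lt_min (by positivity) ?_)
      positivity
    have hε₃1 : ε₃ ≤ 1 := le_trans (min_le_left _ _) (min_le_left _ _)
    have hε₃ε : ε₃ ≤ ε/3 := le_trans (min_le_left _ _) (min_le_right _ _)
    have hε₃δ : ε₃ ≤ δ/9 := le_trans (min_le_right _ _) (min_le_left _ _)
    have hε₃δ2 : ε₃ ≤ δ^2/(64*(R+2)) := le_trans (min_le_right _ _) (min_le_right _ _)
    clear_value ε₃
    set E : ℝ := ε₃ * (8*R + 16) with hEdef
    have hEpos : 0 < E := by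
      have h0 : (0:ℝ) < 8*R + 16 := by linarith
      rw [hEdef]
      exact mul_pos hε₃pos h0
    have hE2 : 2*E = ε₃ * (16*(R+2)) := by rw [hEdef]; ring
    clear_value E
    set NS : ℕ := ⌈R + ‖y‖ + 2⌉₊ with hNSdef
    have hNS : R + ‖y‖ + 2 ≤ (NS : ℝ) := Nat.le_ceil _
    clear_value NS
    obtain ⟨m₁, happroxA⟩ := aw_approx hAW ⟨y, hyA'⟩ NS hε₃pos
    obtain ⟨m₂, happroxB⟩ := aw_approx hBW ⟨y, hyB⟩ NS hε₃pos
    obtain ⟨m₃, hnear₃⟩ := aw_near hAW (fun n => (hAn n).1) hyA' hε₃pos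
    obtain ⟨m₄, hnear₄⟩ := aw_near hBW (fun n => (hBn n).1) hyB hε₃pos
    set n₄ : ℕ := max (max (max m₁ m₂) (max m₃ m₄)) (n₃ + 1) with hn₄def
    have hn₄1 : m₁ ≤ n₄ := le_trans (le_trans (le_max_left _ _) (le_max_left _ _)) (le_max_left _ _)
    have hn₄2 : m₂ ≤ n₄ := le_trans (le_trans (le_max_right _ _) (le_max_left _ _)) (le_max_left _ _)
    have hn₄3 : m₃ ≤ n₄ := le_trans (le_trans (le_max_left _ _) (le_max_right _ _)) (le_max_left _ _)
    have hn₄4 : m₄ ≤ n₄ := le_trans (le_trans (le_max_right _ _) (le_max_right _ _)) (le_max_left _ _)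
    have hn₄5 : n₃ + 1 ≤ n₄ := le_max_right _ _
    clear_value n₄
    -- dichotomy at each step
    have hdich : ∀ n, n₄ ≤ n →
        (‖a (n+1) - y‖^2 ≤ ‖a n - y‖^2 - E) ∨
        (‖a n - y‖ < ε + 2*ε₃ ∧ ‖a (n+1) - y‖ < ε + 6*ε₃) := by
      intro n hn
      have hnn₃ : n₃ ≤ n := by omega
      have hrR : ‖a n - y‖ ≤ R := hbound n hnn₃
      obtain ⟨p, hpA, hpd⟩ := hnear₃ (n+1) (by omega)
      obtain ⟨q, hqB, hqd⟩ := hnear₄ (n+1) (by omega)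
      have hpy : ‖p - y‖ ≤ ε₃ := by rw [← dist_eq_norm, dist_comm]; exact hpd.le
      have hqy : ‖q - y‖ ≤ ε₃ := by rw [← dist_eq_norm, dist_comm]; exact hqd.le
      obtain ⟨hk1, hk2, hk3⟩ := key_step (hAn (n+1)).2.2 (hBn (n+1)).2.2
        (hab.2 n).1 (hab.2 n).2 hpA hpy hqB hqy hε₃pos hε₃1 hrR hRpos
      rcases le_or_gt (‖a n - b (n+1)‖^2 + ‖b (n+1) - a (n+1)‖^2) (2*E) with hsm | hbg
      · -- small steps : near-feasibility
        right
        have hs2 : ‖a n - b (n+1)‖^2 ≤ (δ/2)^2 := by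
          have h1 : 2*E ≤ δ^2/4 := by
            have h2 : (0:ℝ) < 64*(R+2) := by linarith
            have h3 : ε₃ * (64*(R+2)) ≤ (δ^2/(64*(R+2))) * (64*(R+2)) :=
              mul_le_mul_of_nonneg_right hε₃δ2 h2.le
            rw [div_mul_cancel₀ _ h2.ne'] at h3
            nlinarith [hε₃pos, hE2]
          nlinarith [sq_nonneg ‖b (n+1) - a (n+1)‖]
        have hs : ‖a n - b (n+1)‖ ≤ δ/2 := sqle hs2 (by positivity)
        -- a n is in An n
        have hmem : a n ∈ An n := by
          obtain ⟨k, hk⟩ := Nat.exists_eq_succ_of_ne_zero (show n ≠ 0 by omega)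
          rw [hk]
          exact (hab.2 k).2.1
        have hanN : ‖a n‖ ≤ (NS : ℝ) := by
          have h1 : ‖a n - y + y‖ ≤ ‖a n - y‖ + ‖y‖ := norm_add_le _ _
          rw [sub_add_cancel] at h1
          linarith
        obtain ⟨x', hx'A, hx'd⟩ := happroxA n (by omega) (a n) hmem hanN
        have hbbN : ‖b (n+1)‖ ≤ (NS : ℝ) := by
          have h1 : ‖b (n+1) - y + y‖ ≤ ‖b (n+1) - y‖ + ‖y‖ := norm_add_le _ _
          rw [sub_add_cancel] at h1
          have h2 : 2 * ε₃ ≤ 2 := by linarith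
          linarith
        obtain ⟨z', hz'B, hz'd⟩ := happroxB (n+1) (by omega) (b (n+1)) (hab.2 n).1.1 hbbN
        -- u - ⟪w,x'⟫ < ‖w‖ * δ
        have hzx : ‖z' - x'‖ ≤ ε₃ + ‖a n - b (n+1)‖ + ε₃ := by
          have h1 : ‖z' - x'‖ ≤ ‖z' - b (n+1)‖ + ‖b (n+1) - x'‖ :=
            norm_sub_le_norm_sub_add_norm_sub z' (b (n+1)) x'
          have h2 : ‖b (n+1) - x'‖ ≤ ‖b (n+1) - a n‖ + ‖a n - x'‖ :=
            norm_sub_le_norm_sub_add_norm_sub (b (n+1)) (a n) x'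
          have h3 : ‖z' - b (n+1)‖ = ‖b (n+1) - z'‖ := norm_sub_rev _ _
          have h4 : ‖b (n+1) - z'‖ ≤ ε₃ := by rw [← dist_eq_norm]; exact hz'd.le
          have h5 : ‖b (n+1) - a n‖ = ‖a n - b (n+1)‖ := norm_sub_rev _ _
          have h6 : ‖a n - x'‖ ≤ ε₃ := by rw [← dist_eq_norm]; exact hx'd.le
          linarith
        have hux' : u - ⟪w, x'⟫ < ‖w‖ * δ := by
          have h1 := hLip z' x'
          have h2 := hfB z' hz'B
          have h3 : ‖z' - x'‖ ≤ 2*ε₃ + δ/2 := by linarith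
          have h4 : ‖w‖ * ‖z' - x'‖ ≤ ‖w‖ * (2*ε₃ + δ/2) :=
            mul_le_mul_of_nonneg_left h3 hwn.le
          have h5 : 2*ε₃ + δ/2 < δ := by linarith
          have h6 : ‖w‖ * (2*ε₃ + δ/2) < ‖w‖ * δ := by
            exact mul_lt_mul_of_pos_left h5 hwn
          linarith
        have h7 := hδprop x' hx'A hux'
        have h8 : ‖a n - y‖ ≤ ‖a n - x'‖ + ‖x' - y‖ :=
          norm_sub_le_norm_sub_add_norm_sub (a n) x' y
        have h9 : ‖a n - x'‖ ≤ ε₃ := by rw [← dist_eq_norm]; exact hx'd.le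
        have h10 : ‖x' - y‖ = ‖y - x'‖ := norm_sub_rev _ _
        have h11 : ‖a n - y‖ < ε + 2*ε₃ := by
          rw [h10] at h8
          linarith
        exact ⟨h11, by linarith⟩
      · left
        linarith
    -- there is a time with small norm
    have hexists : ∃ m : ℕ, n₄ ≤ m ∧ ‖a m - y‖ ≤ 3*ε := by
      by_contra hno
      push_neg at hno
      have hall : ∀ n, n₄ ≤ n → ‖a (n+1) - y‖^2 ≤ ‖a n - y‖^2 - E := by
        intro n hn
        rcases hdich n hn with h | h
        · exact h
        · exfalso
          have := hno n hn
          have h12 : ε + 2*ε₃ ≤ 3*ε := by linarith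
          linarith [h.1]
      have hiter : ∀ k : ℕ, ‖a (n₄ + k) - y‖^2 ≤ ‖a n₄ - y‖^2 - k * E := by
        intro k
        induction k with
        | zero => simp
        | succ k ih =>
          have h1 := hall (n₄ + k) (by omega)
          have h2 : n₄ + (k+1) = (n₄ + k) + 1 := by omega
          rw [h2]
          push_cast
          push_cast at ih
          linarith
      obtain ⟨k, hk⟩ := exists_nat_gt (‖a n₄ - y‖^2 / E)
      have h1 := hiter k
      have h2 : ‖a n₄ - y‖^2 / E * E < k * E := by
        exact mul_lt_mul_of_pos_right hk hEpos
      rw [div_mul_cancel₀ _ hEpos.ne'] at h2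
      nlinarith [sq_nonneg ‖a (n₄ + k) - y‖]
    obtain ⟨m, hm₄, hm3ε⟩ := hexists
    refine ⟨m, fun n hn => ?_⟩
    induction n, hn using Nat.le_induction with
    | base => exact hm3ε
    | succ n hn ih =>
      rcases hdich n (by omega) with h | h
      · have h1 : ‖a (n+1) - y‖^2 ≤ ‖a n - y‖^2 := by linarith
        have h2 : ‖a (n+1) - y‖ ≤ ‖a n - y‖ := sqle h1 (norm_nonneg _)
        linarith
      · have h1 : 6*ε₃ ≤ 2*ε := by linarith
        linarith [h.2]
  -- bound on b in terms of a
  have hbstep : ∀ ε' : ℝ, 0 < ε' → ∃ m : ℕ, ∀ n, m ≤ n →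
      ‖b (n+1) - y‖ ≤ ‖a n - y‖ + ε' := by
    intro ε' hε'
    obtain ⟨m₇, hq'⟩ := aw_near hBW (fun n => (hBn n).1) hyB (half_pos hε')
    refine ⟨m₇, fun n hn => ?_⟩
    obtain ⟨q, hqB, hqd⟩ := hq' (n+1) (by omega)
    have hqy : ‖q - y‖ ≤ ε'/2 := by rw [← dist_eq_norm, dist_comm]; exact hqd.le
    have firm := projOn_firm (hBn (n+1)).2.2 (hab.2 n).1 hqB
    have h1 : ‖q - b (n+1)‖ ≤ ‖a n - q‖ := by
      refine sqle ?_ (norm_nonneg _)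
      nlinarith [firm, sq_nonneg ‖a n - b (n+1)‖]
    have h2 : ‖b (n+1) - y‖ ≤ ‖b (n+1) - q‖ + ‖q - y‖ :=
      norm_sub_le_norm_sub_add_norm_sub _ q y
    have h3 : ‖b (n+1) - q‖ = ‖q - b (n+1)‖ := norm_sub_rev _ _
    have h4 : ‖a n - q‖ ≤ ‖a n - y‖ + ‖y - q‖ :=
      norm_sub_le_norm_sub_add_norm_sub (a n) y q
    have h5 : ‖y - q‖ = ‖q - y‖ := norm_sub_rev _ _
    linarith
  constructor
  · rw [Metric.tendsto_atTop]
    intro ε hε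
    obtain ⟨m, hm⟩ := hconv (ε/4) (by positivity)
    refine ⟨m, fun n hn => ?_⟩
    rw [dist_eq_norm]
    have := hm n hn
    linarith
  · rw [Metric.tendsto_atTop]
    intro ε hε
    obtain ⟨ma, hma⟩ := hconv (ε/8) (by positivity)
    obtain ⟨mb, hmb⟩ := hbstep (ε/2) (by positivity)
    refine ⟨max ma mb + 1, fun n hn => ?_⟩
    obtain ⟨k, hk⟩ := Nat.exists_eq_succ_of_ne_zero (show n ≠ 0 by omega)
    subst hk
    have hka : ma ≤ k := by omega
    have hkb : mb ≤ k := by omega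
    have h1 := hma k hka
    have h2 := hmb k hkb
    rw [dist_eq_norm]
    linarith
end

section
/- Let X be a real Hilbert space, A a closed convex subset of X with nonempty interior containing the origin on its boundary, and f ∈ X* \ {0} a functional that strongly exposes A at the origin. Let α ≤ 0 and B = {x ∈ X : f(x) ≥ α}. Then the couple (A, B) is stable. -/
open Filter Metric Topology RealInnerProductSpace

/-- The couple `(A, B)` is stable: for every sequences of nonempty closed convex sets
Attouch–Wets converging to `A` and `B` respectively, and every starting point, the
corresponding perturbed alternating projections sequences converge in norm. -/
def StablePair {X : Type*} [NormedAddCommGroup X] [NormedSpace ℝ X] (A B : Set X) : Prop :=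
  ∀ An Bn : ℕ → Set X,
    (∀ n, (An n).Nonempty ∧ IsClosed (An n) ∧ Convex ℝ (An n)) →
    (∀ n, (Bn n).Nonempty ∧ IsClosed (Bn n) ∧ Convex ℝ (Bn n)) →
    AWTendsto An A → AWTendsto Bn B →
    ∀ a₀ : X, ∀ a b : ℕ → X, IsPerturbedAPS An Bn a₀ a b →
      (∃ la : X, Filter.Tendsto a Filter.atTop (nhds la)) ∧
      (∃ lb : X, Filter.Tendsto b Filter.atTop (nhds lb))

section Aux
variable {X : Type*} [NormedAddCommGroup X] [InnerProductSpace ℝ X]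

lemma IsProjOn.inner_le {K : Set X} (hK : Convex ℝ K) {x p : X} (hp : IsProjOn K x p) :
    ∀ z ∈ K, ⟪x - p, z - p⟫ ≤ 0 := by
  haveI : Nonempty K := ⟨⟨p, hp.1⟩⟩
  have h : ‖x - p‖ = ⨅ w : K, ‖x - w‖ := by
    refine le_antisymm (le_ciInf fun w => ?_)
      (ciInf_le (f := fun w : K => ‖x - (w:X)‖) ⟨0, fun _ ⟨w, hw⟩ => hw ▸ norm_nonneg _⟩ ⟨p, hp.1⟩)
    simpa [dist_eq_norm] using hp.2 w w.2
  exact (norm_eq_iInf_iff_real_inner_le_zero hK hp.1).1 h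

lemma IsProjOn.dist_sq_le {K : Set X} (hK : Convex ℝ K) {x p z : X} (hp : IsProjOn K x p)
    (hz : z ∈ K) : ‖p - z‖ ^ 2 + ‖x - p‖ ^ 2 ≤ ‖x - z‖ ^ 2 := by
  have h := hp.inner_le hK z hz
  have hxz : x - z = (x - p) + (p - z) := by abel
  rw [hxz, norm_add_sq_real]
  have h2 : ⟪x - p, p - z⟫ = - ⟪x - p, z - p⟫ := by
    rw [← inner_neg_right]; congr 1; abel
  linarith [h2 ▸ neg_nonneg.mpr h]

lemma IsProjOn.dist_le {K : Set X} (hK : Convex ℝ K) {x p z : X} (hp : IsProjOn K x p)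
    (hz : z ∈ K) : ‖p - z‖ ≤ ‖x - z‖ := by
  have h := hp.dist_sq_le hK hz
  nlinarith [norm_nonneg (p - z), norm_nonneg (x - z), norm_nonneg (x - p), sq_nonneg (‖x - p‖)]

lemma IsProjOn.step_le {K : Set X} (hK : Convex ℝ K) {x p z : X} (hp : IsProjOn K x p)
    (hz : z ∈ K) : ‖x - p‖ ≤ ‖x - z‖ := by
  have h := hp.dist_sq_le hK hz
  nlinarith [norm_nonneg (p - z), norm_nonneg (x - z), norm_nonneg (x - p)]

lemma IsProjOn.dir_est {K : Set X} (hK : Convex ℝ K) {x p e : X} {ρ : ℝ} (hρ : 0 < ρ)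
    (hball : Metric.closedBall e ρ ⊆ K) (hp : IsProjOn K x p) :
    2 * ρ * ‖p - x‖ ≤ ‖x - e‖ ^ 2 - ‖p - e‖ ^ 2 := by
  rcases eq_or_ne p x with rfl | hne
  · simp
  · set s := ‖p - x‖ with hs
    have hs0 : 0 < s := by
      rw [hs, norm_pos_iff]; exact sub_ne_zero.mpr hne
    set q := (ρ / s) • (p - x) with hq
    have hqn : ‖q‖ = ρ := by
      rw [hq, norm_smul, Real.norm_eq_abs, abs_of_pos (by positivity)]
      field_simp; exact hs.symm
    set z := e - q with hz
    have hzK : z ∈ K := hball (by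
      simp only [Metric.mem_closedBall, dist_eq_norm, hz, sub_sub_cancel_left, norm_neg]
      exact hqn.le)
    have h := hp.dist_le hK hzK
    have hsq : ‖p - z‖ ^ 2 ≤ ‖x - z‖ ^ 2 := by
      have := norm_nonneg (p - z); nlinarith
    have e1 : p - z = (p - e) + q := by rw [hz]; abel
    have e2 : x - z = (x - e) + q := by rw [hz]; abel
    rw [e1, e2, norm_add_sq_real, norm_add_sq_real] at hsq
    have hip : ⟪p - e, q⟫ - ⟪x - e, q⟫ = ρ * s := by
      rw [← inner_sub_left]
      have h3 : p - e - (x - e) = p - x := by abel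
      rw [h3, hq, real_inner_smul_right, real_inner_self_eq_norm_sq, ← hs]
      field_simp
    nlinarith [hsq, hip]

end Aux

section Aux2
variable {X : Type*} [NormedAddCommGroup X] [InnerProductSpace ℝ X] [CompleteSpace X]

omit [InnerProductSpace ℝ X] [CompleteSpace X] in
lemma exists_near_of_infDist_le {S : Set X} (hS : S.Nonempty) {x : X} {ε : ℝ} (hε : 0 < ε)
    (h : Metric.infDist x S ≤ ε) : ∃ p ∈ S, ‖x - p‖ ≤ 2 * ε := by
  obtain ⟨p, hp, hd⟩ := (Metric.infDist_lt_iff hS).1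
    ((by linarith : Metric.infDist x S < 2*ε))
  exact ⟨p, hp, by rw [← dist_eq_norm]; linarith⟩

lemma closedBall_subset_of_infDist_le {C : Set X} (hCne : C.Nonempty) (hCc : IsClosed C)
    (hCv : Convex ℝ C) {e : X} {R ε : ℝ} (hε : 0 < ε)
    (h : ∀ z ∈ Metric.closedBall e R, Metric.infDist z C ≤ ε) (hR : 3 * ε ≤ R) :
    Metric.closedBall e (R - 3 * ε) ⊆ C := by
  intro x hx
  have hxe : ‖x - e‖ ≤ R - 3 * ε := by rwa [Metric.mem_closedBall, dist_eq_norm] at hx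
  by_contra hxC
  obtain ⟨g, u, hgC, hgx⟩ := geometric_hahn_banach_closed_point hCv hCc hxC
  have hg0 : g ≠ 0 := by
    rintro rfl
    obtain ⟨w, hw⟩ := hCne
    have h1 := hgC w hw
    simp only [ContinuousLinearMap.zero_apply] at h1 hgx
    linarith
  set v := (InnerProductSpace.toDual ℝ X).symm g with hv
  have hvapp : ∀ z : X, ⟪v, z⟫ = g z := fun z => InnerProductSpace.toDual_symm_apply
  have hvn : ‖v‖ = ‖g‖ := LinearIsometryEquiv.norm_map _ g
  have hvpos : 0 < ‖v‖ := by
    rw [hvn, norm_pos_iff]; exact hg0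
  set z₀ := e + (R / ‖v‖) • v with hz₀
  have hz₀ball : z₀ ∈ Metric.closedBall e R := by
    simp only [Metric.mem_closedBall, dist_eq_norm, hz₀, add_sub_cancel_left, norm_smul,
      Real.norm_eq_abs]
    rw [abs_of_nonneg (div_nonneg (by linarith) hvpos.le)]
    rw [div_mul_cancel₀ _ (ne_of_gt hvpos)]
  obtain ⟨p, hpC, hpd⟩ := exists_near_of_infDist_le hCne hε (h z₀ hz₀ball)
  have hgz₀ : g z₀ = g e + R * ‖g‖ := by
    rw [hz₀, map_add, map_smul, smul_eq_mul, ← hvapp v, real_inner_self_eq_norm_sq]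
    rw [← hvn]; field_simp
  have hb1 : |g (z₀ - p)| ≤ ‖g‖ * (2 * ε) := by
    have h1 := g.le_opNorm (z₀ - p)
    rw [Real.norm_eq_abs] at h1
    exact h1.trans (by nlinarith [norm_nonneg g, norm_nonneg (z₀ - p)])
  have hb2 : |g (x - e)| ≤ ‖g‖ * (R - 3 * ε) := by
    have h1 := g.le_opNorm (x - e)
    rw [Real.norm_eq_abs] at h1
    exact h1.trans (by nlinarith [norm_nonneg g, norm_nonneg (x - e)])
  have hgp := hgC p hpC
  rw [map_sub] at hb1 hb2
  have habs1 := abs_le.mp hb1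
  have habs2 := abs_le.mp hb2
  have hgpos : 0 < ‖g‖ := norm_pos_iff.mpr hg0
  nlinarith [hgp, hgx, hgz₀, habs1.1, habs1.2, habs2.1, habs2.2]

end Aux2

set_option maxHeartbeats 1000000 in
private lemma stmt3_case_neg {X : Type*} [NormedAddCommGroup X] [InnerProductSpace ℝ X]
    [CompleteSpace X]
    (A : Set X) (hAv : Convex ℝ A) (hAint : (interior A).Nonempty)
    (h0A : (0:X) ∈ A)
    (f : X →L[ℝ] ℝ) (hfpos : 0 < ‖f‖) (hfA : ∀ x ∈ A, f x ≤ 0)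
    (α : ℝ) (hneg : α < 0)
    (An Bn : ℕ → Set X)
    (hAn : ∀ n, (An n).Nonempty ∧ IsClosed (An n) ∧ Convex ℝ (An n))
    (hBn : ∀ n, (Bn n).Nonempty ∧ IsClosed (Bn n) ∧ Convex ℝ (Bn n))
    (hA : AWTendsto An A) (hB : AWTendsto Bn {x : X | α ≤ f x})
    (a b : ℕ → X)
    (hstep : ∀ n : ℕ, IsProjOn (Bn (n+1)) (a n) (b (n+1)) ∧
      IsProjOn (An (n+1)) (b (n+1)) (a (n+1))) :
    (∃ la : X, Tendsto a atTop (nhds la)) ∧ (∃ lb : X, Tendsto b atTop (nhds lb)) := by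
    obtain ⟨p, hp⟩ := hAint
    have hpA : p ∈ A := interior_subset hp
    have hfp : f p ≤ 0 := hfA p hpA
    have hfp1 : f p - 1 < 0 := by linarith
    set t : ℝ := min 1 ((α/2) / (f p - 1)) with ht
    have ht0 : 0 < t := lt_min one_pos (div_pos_iff.mpr (Or.inr ⟨by linarith, hfp1⟩))
    have ht1 : t ≤ 1 := min_le_left _ _
    set e : X := t • p with he
    have heA : e ∈ interior A := by
      have h1 : t • p + (1 - t) • (0:X) ∈ interior A :=
        Convex.combo_interior_closure_mem_interior hAv hp
          (subset_closure h0A) ht0 (by linarith) (by ring)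
      simpa using h1
    have hfe : α < f e := by
      have h1 : t ≤ (α/2) / (f p - 1) := min_le_right _ _
      have h2 := mul_le_mul_of_nonpos_right h1 hfp1.le
      rw [div_mul_cancel₀ _ (ne_of_lt hfp1)] at h2
      have h3 : f e = t * f p := by rw [he, map_smul, smul_eq_mul]
      nlinarith [ht0]
    obtain ⟨r₁, hr₁, hball⟩ := Metric.mem_nhds_iff.mp (mem_interior_iff_mem_nhds.mp heA)
    set σ := f e - α with hσdef
    have hσ : 0 < σ := by simp only [hσdef]; linarith
    set ρ := min (r₁/4) (σ/(2*‖f‖)) with hρdef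
    have hρ : 0 < ρ := lt_min (by linarith) (by positivity)
    have hρr : 2*ρ < r₁ := by
      have := min_le_left (r₁/4) (σ/(2*‖f‖)); linarith
    have hρσ : 2*ρ*‖f‖ ≤ σ := by
      have h1 := min_le_right (r₁/4) (σ/(2*‖f‖))
      have h2 : ρ * (2*‖f‖) ≤ σ := by
        rw [← le_div_iff₀ (by positivity)]; exact h1
      linarith
    have hballA : Metric.closedBall e (2*ρ) ⊆ A := fun z hz => hball (by
      rw [Metric.mem_ball]
      exact lt_of_le_of_lt (Metric.mem_closedBall.mp hz) hρr)
    have hballB : ∀ z ∈ Metric.closedBall e (2*ρ), α ≤ f z := by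
      intro z hz
      have h1 := f.le_opNorm (z - e)
      rw [Real.norm_eq_abs, map_sub] at h1
      have hz' : ‖z - e‖ ≤ 2*ρ := by rwa [Metric.mem_closedBall, dist_eq_norm] at hz
      have h3 : ‖f‖ * ‖z - e‖ ≤ σ := by
        nlinarith [mul_le_mul_of_nonneg_left hz' hfpos.le]
      have h2 := (abs_le.mp (h1.trans h3)).1
      have h6 : σ = f e - α := hσdef
      linarith
    set N₀ : ℕ := ⌈‖e‖ + 2*ρ⌉₊ with hN₀def
    have hN₀ : ‖e‖ + 2*ρ ≤ (N₀:ℝ) := Nat.le_ceil _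
    obtain ⟨NA, hNA⟩ := hA N₀ (ρ/8) (by positivity)
    obtain ⟨NB, hNB⟩ := hB N₀ (ρ/8) (by positivity)
    set N := max NA NB with hNdef
    have hnorm : ∀ z ∈ Metric.closedBall e (2*ρ), ‖z‖ ≤ (N₀:ℝ) := by
      intro z hz
      have hz' : ‖z - e‖ ≤ 2*ρ := by rwa [Metric.mem_closedBall, dist_eq_norm] at hz
      have h9 : e + (z - e) = z := by abel
      calc ‖z‖ = ‖e + (z - e)‖ := by rw [h9]
        _ ≤ ‖e‖ + ‖z - e‖ := norm_add_le _ _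
        _ ≤ (N₀:ℝ) := by linarith
    have hsubA : ∀ n, N ≤ n → Metric.closedBall e ρ ⊆ An n := by
      intro n hn
      have key : ∀ z ∈ Metric.closedBall e (2*ρ), Metric.infDist z (An n) ≤ ρ/4 := by
        intro z hz
        have h1 := hNA n (le_trans (le_max_left _ _) hn) z (hnorm z hz)
        rw [Metric.infDist_zero_of_mem (hballA hz), sub_zero,
          abs_of_nonneg Metric.infDist_nonneg] at h1
        linarith
      have h2 := closedBall_subset_of_infDist_le (hAn n).1 (hAn n).2.1 (hAn n).2.2
        (by positivity : (0:ℝ) < ρ/4) key (by linarith)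
      exact subset_trans (Metric.closedBall_subset_closedBall (by linarith)) h2
    have hsubB : ∀ n, N ≤ n → Metric.closedBall e ρ ⊆ Bn n := by
      intro n hn
      have key : ∀ z ∈ Metric.closedBall e (2*ρ), Metric.infDist z (Bn n) ≤ ρ/4 := by
        intro z hz
        have h1 := hNB n (le_trans (le_max_right _ _) hn) z (hnorm z hz)
        rw [Metric.infDist_zero_of_mem (show z ∈ {x : X | α ≤ f x} from hballB z hz), sub_zero,
          abs_of_nonneg Metric.infDist_nonneg] at h1
        linarith
      have h2 := closedBall_subset_of_infDist_le (hBn n).1 (hBn n).2.1 (hBn n).2.2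
        (by positivity : (0:ℝ) < ρ/4) key (by linarith)
      exact subset_trans (Metric.closedBall_subset_closedBall (by linarith)) h2
    set V : X → ℝ := fun x => ‖x - e‖^2 with hV
    have keyB : ∀ n, N ≤ n → 2*ρ*‖b (n+1) - a n‖ ≤ V (a n) - V (b (n+1)) := by
      intro n hn
      exact ((hstep n).1).dir_est (hBn (n+1)).2.2 hρ (hsubB (n+1) (by omega))
    have keyA : ∀ n, N ≤ n → 2*ρ*‖a (n+1) - b (n+1)‖ ≤ V (b (n+1)) - V (a (n+1)) := by
      intro n hn
      exact ((hstep n).2).dir_est (hAn (n+1)).2.2 hρ (hsubA (n+1) (by omega))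
    have monoAB : ∀ n, N ≤ n → V (a (n+1)) ≤ V (b (n+1)) ∧ V (b (n+1)) ≤ V (a n) := by
      intro n hn
      have h1 := keyB n hn
      have h2 := keyA n hn
      have p1 : 0 ≤ 2*ρ*‖b (n+1) - a n‖ := by positivity
      have p2 : 0 ≤ 2*ρ*‖a (n+1) - b (n+1)‖ := by positivity
      exact ⟨by linarith, by linarith⟩
    set W : ℕ → ℝ := fun k => V (a (N + k)) with hW
    have hWanti : Antitone W := antitone_nat_of_succ_le (fun k => by
      have h1 := (monoAB (N + k) (Nat.le_add_right _ _)).1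
      have h2 := (monoAB (N + k) (Nat.le_add_right _ _)).2
      show V (a (N + k + 1)) ≤ V (a (N + k))
      linarith)
    have hWbdd : BddBelow (Set.range W) := ⟨0, by
      rintro _ ⟨k, rfl⟩
      exact sq_nonneg _⟩
    have hWtend : Tendsto W atTop (nhds (⨅ k, W k)) := tendsto_atTop_ciInf hWanti hWbdd
    set L := ⨅ k, W k with hL
    have hLleW : ∀ k, L ≤ W k := fun k => ciInf_le hWbdd k
    have path : ∀ k m : ℕ, k ≤ m →
        2*ρ*‖a (N + m) - a (N + k)‖ ≤ V (a (N + k)) - V (a (N + m)) := by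
      intro k m hkm
      induction m, hkm using Nat.le_induction with
      | base => simp
      | succ m hkm ih =>
        have h1 := keyB (N+m) (Nat.le_add_right _ _)
        have h2 := keyA (N+m) (Nat.le_add_right _ _)
        have hrw : N + (m+1) = N + m + 1 := rfl
        rw [hrw]
        have htri := dist_triangle4 (a (N+m+1)) (b (N+m+1)) (a (N+m)) (a (N+k))
        simp only [dist_eq_norm] at htri
        have h4 : 2*ρ*‖a (N+m+1) - a (N+k)‖ ≤
            2*ρ*‖a (N+m+1) - b (N+m+1)‖ + 2*ρ*‖b (N+m+1) - a (N+m)‖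
              + 2*ρ*‖a (N+m) - a (N+k)‖ := by
          calc 2*ρ*‖a (N+m+1) - a (N+k)‖
              ≤ 2*ρ*(‖a (N+m+1) - b (N+m+1)‖ + ‖b (N+m+1) - a (N+m)‖
                + ‖a (N+m) - a (N+k)‖) :=
                mul_le_mul_of_nonneg_left htri (by positivity : (0:ℝ) ≤ 2*ρ)
            _ = _ := by ring
        linarith
    have hcauchy : CauchySeq a := by
      rw [Metric.cauchySeq_iff']
      intro ε hε
      obtain ⟨k₀, hk₀⟩ := Metric.tendsto_atTop.mp hWtend (ρ*ε) (by positivity)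
      refine ⟨N + k₀, fun n hn => ?_⟩
      obtain ⟨m, rfl⟩ : ∃ m, n = N + m := ⟨n - N, by omega⟩
      have hmk : k₀ ≤ m := by omega
      have h1 := path k₀ m hmk
      have h2 := hk₀ k₀ le_rfl
      rw [Real.dist_eq, abs_of_nonneg (by linarith [hLleW k₀])] at h2
      have h6 : W k₀ = V (a (N + k₀)) := rfl
      have h7 : L ≤ V (a (N + m)) := hLleW m
      have hρε : 0 < ρ*ε := by positivity
      rw [dist_eq_norm]
      nlinarith [norm_nonneg (a (N+m) - a (N+k₀)), hρ]
    obtain ⟨la, hla⟩ := cauchySeq_tendsto_of_complete hcauchy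
    have hbstep : Tendsto (fun n => b (n+1) - a n) atTop (nhds 0) := by
      rw [Metric.tendsto_atTop]
      intro ε hε
      obtain ⟨k₁, hk₁⟩ := Metric.tendsto_atTop.mp hWtend (ρ*ε) (by positivity)
      refine ⟨N + k₁, fun n hn => ?_⟩
      obtain ⟨m, rfl⟩ : ∃ m, n = N + m := ⟨n - N, by omega⟩
      have h1 := keyB (N+m) (Nat.le_add_right _ _)
      have h2 := (monoAB (N+m) (Nat.le_add_right _ _)).1
      have h3 : L ≤ V (a (N+m+1)) := hLleW (m+1)
      have h4 := hk₁ m (by omega)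
      rw [Real.dist_eq, abs_of_nonneg (by linarith [hLleW m])] at h4
      have h5 : W m = V (a (N+m)) := rfl
      rw [h5] at h4
      rw [dist_zero_right]
      have hρε : 0 < ρ*ε := by positivity
      nlinarith [norm_nonneg (b (N+m+1) - a (N+m)), hρ, h1, h2, h3, h4]
    have hb1 : Tendsto (fun n => b (n+1)) atTop (nhds la) := by
      have h3 := hbstep.add hla
      simpa using h3
    exact ⟨⟨la, hla⟩, ⟨la, (tendsto_add_atTop_iff_nat 1).mp hb1⟩⟩

set_option maxHeartbeats 4000000 in
private lemma stmt3_case_zero {X : Type*} [NormedAddCommGroup X] [InnerProductSpace ℝ X]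
    [CompleteSpace X]
    (A : Set X)
    (h0A : (0:X) ∈ A)
    (f : X →L[ℝ] ℝ) (hfpos : 0 < ‖f‖) (hf0 : f (0:X) = 0) (hfA : ∀ x ∈ A, f x ≤ 0)
    (hexp : StronglyExposes f A 0)
    (An Bn : ℕ → Set X)
    (hAn : ∀ n, (An n).Nonempty ∧ IsClosed (An n) ∧ Convex ℝ (An n))
    (hBn : ∀ n, (Bn n).Nonempty ∧ IsClosed (Bn n) ∧ Convex ℝ (Bn n))
    (hA : AWTendsto An A) (hB : AWTendsto Bn {x : X | (0:ℝ) ≤ f x})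
    (a b : ℕ → X)
    (hstep : ∀ n : ℕ, IsProjOn (Bn (n+1)) (a n) (b (n+1)) ∧
      IsProjOn (An (n+1)) (b (n+1)) (a (n+1))) :
    (∃ la : X, Tendsto a atTop (nhds la)) ∧ (∃ lb : X, Tendsto b atTop (nhds lb)) := by
  have h0B : (0:X) ∈ {x : X | (0:ℝ) ≤ f x} := by simp [hf0]
  have hbmem : ∀ n : ℕ, b (n+1) ∈ Bn (n+1) := fun n => (hstep n).1.1
  have hamem : ∀ n : ℕ, a (n+1) ∈ An (n+1) := fun n => (hstep n).2.1
  have nearB : ∀ ε : ℝ, 0 < ε → ∃ N, ∀ n, N ≤ n → ∃ c ∈ Bn n, ‖c‖ ≤ ε := by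
    intro ε hε
    obtain ⟨N, hN⟩ := hB 1 (ε/2) (by positivity)
    refine ⟨N, fun n hn => ?_⟩
    have h1 := hN n hn 0 (by simp)
    rw [Metric.infDist_zero_of_mem h0B, sub_zero, abs_of_nonneg Metric.infDist_nonneg] at h1
    obtain ⟨c, hc, hcd⟩ := (Metric.infDist_lt_iff (hBn n).1).mp
      ((by linarith : Metric.infDist (0:X) (Bn n) < ε))
    exact ⟨c, hc, by rw [← dist_zero_left]; exact hcd.le⟩
  have nearA : ∀ ε : ℝ, 0 < ε → ∃ N, ∀ n, N ≤ n → ∃ c ∈ An n, ‖c‖ ≤ ε := by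
    intro ε hε
    obtain ⟨N, hN⟩ := hA 1 (ε/2) (by positivity)
    refine ⟨N, fun n hn => ?_⟩
    have h1 := hN n hn 0 (by simp)
    rw [Metric.infDist_zero_of_mem h0A, sub_zero, abs_of_nonneg Metric.infDist_nonneg] at h1
    obtain ⟨c, hc, hcd⟩ := (Metric.infDist_lt_iff (hAn n).1).mp
      ((by linarith : Metric.infDist (0:X) (An n) < ε))
    exact ⟨c, hc, by rw [← dist_zero_left]; exact hcd.le⟩
  -- slice property from strong exposedness
  have slice : ∀ ρ : ℝ, 0 < ρ → ∃ m : ℝ, 0 < m ∧ ∀ x ∈ A, -m ≤ f x → ‖x‖ ≤ ρ := by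
    intro ρ hρ
    by_contra hcon
    push_neg at hcon
    have hseq : ∀ k : ℕ, ∃ x, x ∈ A ∧ -(1/((k:ℝ)+1)) ≤ f x ∧ ρ < ‖x‖ := by
      intro k
      obtain ⟨x, hx1, hx2, hx3⟩ := hcon (1/((k:ℝ)+1)) (by positivity)
      exact ⟨x, hx1, hx2, hx3⟩
    choose x hxA hxf hxρ using hseq
    have h1 : Tendsto (fun k => f (x k)) atTop (nhds (f 0)) := by
      rw [hf0]
      have hup : ∀ k : ℕ, f (x k) ≤ 0 := fun k => hfA _ (hxA k)
      have hneg1 : Tendsto (fun k : ℕ => -(1/((k:ℝ)+1))) atTop (nhds 0) := by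
        have h2 := tendsto_one_div_add_atTop_nhds_zero_nat (𝕜 := ℝ)
        simpa using h2.neg
      exact tendsto_of_tendsto_of_tendsto_of_le_of_le hneg1 tendsto_const_nhds hxf hup
    have h2 := hexp.2.2 x hxA h1
    rw [tendsto_zero_iff_norm_tendsto_zero] at h2
    obtain ⟨k, hk⟩ := (h2.eventually_lt_const hρ).exists
    exact absurd (hxρ k) (not_lt.mpr hk.le)
  -- E2 : uniform lower bound for f on Bn
  have E2 : ∀ θ : ℝ, 0 < θ → ∃ N, ∀ n, N ≤ n → ∀ x ∈ Bn n, -θ*(1+‖x‖) ≤ f x := by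
    intro θ hθ
    set ε := min 1 (θ/(8*(‖f‖+1))) with hεdef
    have hε0 : 0 < ε := lt_min one_pos (by positivity)
    have hε1 : ε ≤ 1 := min_le_left _ _
    have hεθ : ε * (8*(‖f‖+1)) ≤ θ := by
      have h1 := min_le_right 1 (θ/(8*(‖f‖+1)))
      rw [← le_div_iff₀ (by positivity)]
      exact h1
    obtain ⟨N₁, hN₁⟩ := nearB ε hε0
    obtain ⟨N₂, hN₂⟩ := hB 3 ε hε0
    refine ⟨max N₁ N₂, fun n hn x hx => ?_⟩
    obtain ⟨c, hcB, hcn⟩ := hN₁ n (le_trans (le_max_left _ _) hn)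
    have hloc : ∀ w ∈ Bn n, ‖w‖ ≤ 3 → -(2*ε*‖f‖) ≤ f w := by
      intro w hw hwn
      have h1 := hN₂ n (le_trans (le_max_right _ _) hn) w (by exact_mod_cast hwn)
      rw [Metric.infDist_zero_of_mem hw, zero_sub, abs_neg,
        abs_of_nonneg Metric.infDist_nonneg] at h1
      obtain ⟨w', hw', hd⟩ := (Metric.infDist_lt_iff ⟨0, h0B⟩).mp h1
      have hw'0 : (0:ℝ) ≤ f w' := hw'
      have hb2 := f.le_opNorm (w - w')
      rw [Real.norm_eq_abs, map_sub] at hb2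
      have hd' : ‖w - w'‖ ≤ ε := by rw [← dist_eq_norm]; linarith
      have h3 := (abs_le.mp hb2).1
      linarith only [h3, hw'0, mul_le_mul_of_nonneg_left hd' (norm_nonneg f),
        mul_nonneg hε0.le (norm_nonneg f)]
    by_cases hxc : ‖x - c‖ ≤ 1
    · have hx3 : ‖x‖ ≤ 3 := by
        have h1 : ‖x‖ ≤ ‖x - c‖ + ‖c‖ := by
          have h2 := norm_add_le (x - c) c; simpa using h2
        linarith
      have h2 := hloc x hx hx3
      linarith only [h2, hεθ, hε0, mul_nonneg hθ.le (norm_nonneg x),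
        mul_nonneg hε0.le hfpos.le]
    · push_neg at hxc
      have hs0 : (0:ℝ) < ‖x - c‖ := by linarith
      set s := ‖x - c‖ with hsdef
      set u := 1/s with hudef
      have hu0 : 0 < u := by positivity
      have hu1 : u ≤ 1 := by rw [hudef, div_le_one hs0]; linarith
      set z := (1 - u) • c + u • x with hzdef
      have hzB : z ∈ Bn n := (hBn n).2.2 hcB hx (by linarith) hu0.le (by ring)
      have hzc : z - c = u • (x - c) := by
        rw [hzdef, sub_smul, one_smul, smul_sub]; abel
      have hzn : ‖z‖ ≤ 3 := by
        have h1 : ‖z - c‖ = u * s := by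
          rw [hzc, norm_smul, Real.norm_eq_abs, abs_of_pos hu0]
        have h2 : u * s = 1 := by rw [hudef]; field_simp
        have h3 : ‖z‖ ≤ ‖z - c‖ + ‖c‖ := by
          have h4 := norm_add_le (z - c) c; simpa using h4
        rw [h1, h2] at h3; linarith
      have hfz := hloc z hzB hzn
      have hfzeq : f z = (1 - u) * f c + u * f x := by
        rw [hzdef, map_add, map_smul, map_smul, smul_eq_mul, smul_eq_mul]
      have hfceq : |f c| ≤ ‖f‖ * ε := by
        have hb2 := f.le_opNorm c
        rw [Real.norm_eq_abs] at hb2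
        exact hb2.trans (mul_le_mul_of_nonneg_left hcn (norm_nonneg f))
      have hkey : s * f z = (s - 1) * f c + f x := by
        rw [hfzeq, hudef]
        field_simp
        try ring
      have hsx : s ≤ ‖x‖ + 1 := by
        have h1 : ‖x - c‖ ≤ ‖x‖ + ‖c‖ := norm_sub_le x c
        linarith
      have hp0 : (0:ℝ) ≤ ‖f‖*ε := by positivity
      have h1 : s * (-(2*ε*‖f‖)) ≤ s * f z := mul_le_mul_of_nonneg_left hfz hs0.le
      have h2 : (s - 1) * f c ≤ (s - 1) * (‖f‖ * ε) :=
        mul_le_mul_of_nonneg_left (le_trans (le_abs_self _) hfceq) (by linarith)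
      have h3 : -(3*ε*‖f‖)*s ≤ f x := by linarith only [hkey, h1, h2, hp0]
      have h4 : -(3*ε*‖f‖)*(‖x‖+1) ≤ -(3*ε*‖f‖)*s :=
        mul_le_mul_of_nonpos_left hsx (by linarith only [hp0])
      have h5 : 3*ε*‖f‖ ≤ θ := by linarith only [hεθ, hε0, hp0]
      have h6 := mul_le_mul_of_nonneg_right h5 (show (0:ℝ) ≤ 1+‖x‖ by positivity)
      linarith only [h3, h4, h6]
  -- E3 : uniform negative upper bound for f on An away from 0
  have E3 : ∃ cc : ℝ, 0 < cc ∧ ∃ N, ∀ n, N ≤ n → ∀ x ∈ An n, 3 ≤ ‖x‖ → f x ≤ -cc*‖x‖ := by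
    obtain ⟨m, hm, hslice⟩ := slice 1 one_pos
    set ε := min (1/4 : ℝ) (m/(8*(‖f‖+1))) with hεdef
    have hε0 : 0 < ε := lt_min (by norm_num) (by positivity)
    have hε4 : ε ≤ 1/4 := min_le_left _ _
    have hεm : ε * (8*(‖f‖+1)) ≤ m := by
      have h1 := min_le_right (1/4 : ℝ) (m/(8*(‖f‖+1)))
      rw [← le_div_iff₀ (by positivity)]
      exact h1
    have hεf : ε * ‖f‖ ≤ m/8 := by
      linarith only [hεm, hε0, mul_nonneg hε0.le hfpos.le]
    obtain ⟨N₁, hN₁⟩ := nearA ε hε0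
    obtain ⟨N₂, hN₂⟩ := hA 4 ε hε0
    refine ⟨m/4, by positivity, max N₁ N₂, fun n hn x hx hx3 => ?_⟩
    obtain ⟨d, hdA, hdn⟩ := hN₁ n (le_trans (le_max_left _ _) hn)
    have hxd : 2 ≤ ‖x - d‖ := by
      have h1 : ‖x‖ - ‖d‖ ≤ ‖x - d‖ := norm_sub_norm_le x d
      linarith
    set s := ‖x - d‖ with hsdef
    have hs0 : (0:ℝ) < s := by linarith
    set u := 2/s with hudef
    have hu0 : 0 < u := by positivity
    have hu1 : u ≤ 1 := by rw [hudef, div_le_one hs0]; linarith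
    set z := (1 - u) • d + u • x with hzdef
    have hzA : z ∈ An n := (hAn n).2.2 hdA hx (by linarith) hu0.le (by ring)
    have hzc : z - d = u • (x - d) := by
      rw [hzdef, sub_smul, one_smul, smul_sub]; abel
    have hzd2 : ‖z - d‖ = 2 := by
      rw [hzc, norm_smul, Real.norm_eq_abs, abs_of_pos hu0, hudef]
      field_simp; exact hsdef.symm
    have hzn4 : ‖z‖ ≤ 4 := by
      have h3 : ‖z‖ ≤ ‖z - d‖ + ‖d‖ := by
        have h4 := norm_add_le (z - d) d; simpa using h4
      rw [hzd2] at h3; linarith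
    have hznlow : 2 - ε ≤ ‖z‖ := by
      have h3 : ‖z - d‖ ≤ ‖z‖ + ‖d‖ := norm_sub_le z d
      rw [hzd2] at h3; linarith
    have h1 := hN₂ n (le_trans (le_max_right _ _) hn) z (by exact_mod_cast hzn4)
    rw [Metric.infDist_zero_of_mem hzA, zero_sub, abs_neg,
      abs_of_nonneg Metric.infDist_nonneg] at h1
    obtain ⟨z', hz'A, hdz⟩ := (Metric.infDist_lt_iff ⟨0, h0A⟩).mp h1
    have hdz' : ‖z - z'‖ ≤ ε := by rw [← dist_eq_norm]; exact hdz.le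
    have hz'n : 1 < ‖z'‖ := by
      have h2 : ‖z‖ - ‖z'‖ ≤ ‖z - z'‖ := norm_sub_norm_le z z'
      linarith
    have hfz' : f z' < -m := by
      by_contra hcc
      push_neg at hcc
      exact absurd (hslice z' hz'A hcc) (not_le.mpr hz'n)
    have hfz : f z ≤ -m + ‖f‖*ε := by
      have hb2 := f.le_opNorm (z - z')
      rw [Real.norm_eq_abs, map_sub] at hb2
      have h5 := (abs_le.mp hb2).2
      have h6 : ‖f‖*‖z - z'‖ ≤ ‖f‖*ε := mul_le_mul_of_nonneg_left hdz' (norm_nonneg f)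
      linarith
    have hfdabs : |f d| ≤ ‖f‖ * ε := by
      have hb2 := f.le_opNorm d
      rw [Real.norm_eq_abs] at hb2
      exact hb2.trans (mul_le_mul_of_nonneg_left hdn (norm_nonneg f))
    have hfzeq : f z = (1 - u) * f d + u * f x := by
      rw [hzdef, map_add, map_smul, map_smul, smul_eq_mul, smul_eq_mul]
    have hkey : s * f z = (s - 2) * f d + 2 * f x := by
      rw [hfzeq, hudef]
      field_simp
      try ring
    have hfz2 : f z ≤ -(7*m/8) := by linarith only [hεf, hfz]
    have hfdlow : -(m/8) ≤ f d := by linarith only [hεf, (abs_le.mp hfdabs).1]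
    have h7 : s * f z ≤ s * (-(7*m/8)) := mul_le_mul_of_nonneg_left hfz2 hs0.le
    have h8 : (s - 2) * (-(m/8)) ≤ (s - 2) * f d :=
      mul_le_mul_of_nonneg_left hfdlow (by linarith)
    have h9 : 2 * f x ≤ -(6*m/8)*s + (-(m/4)) := by linarith only [hkey, h7, h8]
    have hsx : ‖x‖ - 1/4 ≤ s := by
      have h10 : ‖x‖ - ‖d‖ ≤ ‖x - d‖ := norm_sub_norm_le x d
      linarith
    have h11 := mul_le_mul_of_nonneg_left hsx (show (0:ℝ) ≤ 6*m/8 by positivity)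
    have h12 : (6*m/8)*s ≥ (6*m/8)*‖x‖ - (6*m/8)/4 := by linarith only [h11]
    have h13 : 2 * f x ≤ -((6*m/8)*‖x‖) + (6*m/8)/4 + (-(m/4)) := by
      linarith only [h9, h12]
    linarith only [h13, mul_nonneg hm.le (norm_nonneg x), hm]
  -- boundedness of the sequence a
  obtain ⟨cc, hcc, N₃, hE3⟩ := E3
  have hbound : ∃ R : ℝ, 1 ≤ R ∧ ∃ NR, ∀ n, NR ≤ n → ‖a n‖ ≤ R := by
    set μ := min (cc/(2*‖f‖)) 1 with hμdef
    have hμ0 : 0 < μ := lt_min (by positivity) one_pos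
    have hμ1 : μ ≤ 1 := min_le_right _ _
    obtain ⟨N₄, hE2'⟩ := E2 (cc/4) (by positivity)
    obtain ⟨N₅, hnB⟩ := nearB 1 one_pos
    obtain ⟨N₆, hnA⟩ := nearA 1 one_pos
    set R₃ : ℝ := 3 + 12/μ^2 with hR₃def
    have hR₃3 : (3:ℝ) ≤ R₃ := by
      rw [hR₃def]
      have h1 : (0:ℝ) < 12/μ^2 := by positivity
      linarith
    have hR₃12 : 12/μ^2 ≤ R₃ := by
      rw [hR₃def]; linarith
    set NN := max (max N₃ N₄) (max (max N₅ N₆) 1) with hNNdef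
    have step : ∀ n, NN ≤ n →
        (‖a (n+1)‖ ≤ ‖a n‖ + 4) ∧ (R₃ ≤ ‖a n‖ → ‖a (n+1)‖ ≤ ‖a n‖) := by
      intro n hn
      obtain ⟨cB, hcB, hcBn⟩ := hnB (n+1) (by omega)
      obtain ⟨dA, hdA, hdAn⟩ := hnA (n+1) (by omega)
      have hPB := (hstep n).1
      have hPA := (hstep n).2
      have hbb : ‖b (n+1) - cB‖ ≤ ‖a n - cB‖ := hPB.dist_le (hBn (n+1)).2.2 hcB
      have haa : ‖a (n+1) - dA‖ ≤ ‖b (n+1) - dA‖ := hPA.dist_le (hAn (n+1)).2.2 hdA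
      have g1 : ‖b (n+1)‖ ≤ ‖a n‖ + 2 := by
        have t1 : ‖b (n+1)‖ ≤ ‖b (n+1) - cB‖ + ‖cB‖ := by
          have t0 := norm_add_le (b (n+1) - cB) cB; simpa using t0
        have t2 : ‖a n - cB‖ ≤ ‖a n‖ + ‖cB‖ := norm_sub_le _ _
        linarith only [t1, t2, hbb, hcBn]
      have g2 : ‖a (n+1)‖ ≤ ‖b (n+1)‖ + 2 := by
        have t1 : ‖a (n+1)‖ ≤ ‖a (n+1) - dA‖ + ‖dA‖ := by
          have t0 := norm_add_le (a (n+1) - dA) dA; simpa using t0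
        have t2 : ‖b (n+1) - dA‖ ≤ ‖b (n+1)‖ + ‖dA‖ := norm_sub_le _ _
        linarith only [t1, t2, haa, hdAn]
      refine ⟨by linarith only [g1, g2], fun hR => ?_⟩
      have haAn : a n ∈ An n := by
        obtain ⟨k, rfl⟩ : ∃ k, n = k + 1 := ⟨n - 1, by omega⟩
        exact hamem k
      have hA3 : (3:ℝ) ≤ ‖a n‖ := le_trans hR₃3 hR
      have hfa : f (a n) ≤ -cc * ‖a n‖ := hE3 n (by omega) _ haAn hA3
      have hfb : -(cc/4)*(1+‖b (n+1)‖) ≤ f (b (n+1)) := hE2' (n+1) (by omega) _ (hbmem n)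
      have hsB : μ * ‖a n‖ ≤ ‖a n - b (n+1)‖ := by
        have hdf := f.le_opNorm (b (n+1) - a n)
        rw [Real.norm_eq_abs, map_sub] at hdf
        have h5 := (abs_le.mp hdf).2
        have h6 : (cc/2) * ‖a n‖ ≤ f (b (n+1)) - f (a n) := by
          linarith only [hfb, hfa,
            mul_le_mul_of_nonneg_left g1 (show (0:ℝ) ≤ cc/4 by positivity),
            mul_le_mul_of_nonneg_left hA3 (show (0:ℝ) ≤ cc/4 by positivity)]
        have h9 : (cc/2) * ‖a n‖ ≤ ‖f‖ * ‖b (n+1) - a n‖ := le_trans h6 h5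
        rw [norm_sub_rev] at h9
        have h10 : (cc/(2*‖f‖)) * ‖a n‖ ≤ ‖a n - b (n+1)‖ := by
          rw [div_mul_eq_mul_div, div_le_iff₀ (by positivity : (0:ℝ) < 2*‖f‖)]
          linarith only [h9]
        have h7 : μ * ‖a n‖ ≤ (cc/(2*‖f‖)) * ‖a n‖ :=
          mul_le_mul_of_nonneg_right (min_le_left _ _) (norm_nonneg _)
        linarith
      have hA12 : 12 ≤ ‖a n‖ * μ^2 := by
        have h1 : 12/μ^2 ≤ ‖a n‖ := le_trans hR₃12 hR
        exact (div_le_iff₀ (by positivity)).mp h1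
      have h11 : ‖a n - cB‖ ≤ ‖a n‖ + 1 := by
        have t2 : ‖a n - cB‖ ≤ ‖a n‖ + ‖cB‖ := norm_sub_le _ _
        linarith
      have firm := hPB.dist_sq_le (hBn (n+1)).2.2 hcB
      have ht2 : (μ * ‖a n‖)^2 ≤ ‖a n - b (n+1)‖^2 :=
        pow_le_pow_left₀ (by positivity) hsB 2
      have h11sq : ‖a n - cB‖^2 ≤ (‖a n‖+1)^2 := pow_le_pow_left₀ (norm_nonneg _) h11 2
      have h12 : ‖b (n+1) - cB‖^2 ≤ (1 - μ^2/2) * ‖a n‖^2 := by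
        linarith only [firm, ht2, h11sq, hA3,
          mul_le_mul_of_nonneg_right hA12 (norm_nonneg (a n))]
      have h13 : ‖b (n+1) - cB‖ ≤ (1 - μ^2/4) * ‖a n‖ := by
        have hnn : (0:ℝ) ≤ (1 - μ^2/4) * ‖a n‖ :=
          mul_nonneg (by linarith only [hμ1, hμ0,
            mul_le_mul_of_nonneg_left hμ1 hμ0.le]) (norm_nonneg _)
        have h15 : ‖b (n+1) - cB‖^2 ≤ ((1 - μ^2/4) * ‖a n‖)^2 := by
          linarith only [h12, sq_nonneg (μ^2 * ‖a n‖)]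
        exact (pow_le_pow_iff_left₀ (norm_nonneg _) hnn (by norm_num)).mp h15
      have h16 : ‖b (n+1)‖ ≤ (1 - μ^2/4) * ‖a n‖ + 1 := by
        have t1 : ‖b (n+1)‖ ≤ ‖b (n+1) - cB‖ + ‖cB‖ := by
          have t0 := norm_add_le (b (n+1) - cB) cB; simpa using t0
        linarith only [t1, h13, hcBn]
      linarith only [g2, h16, hA12]
    set R := max (‖a NN‖) (R₃ + 4) with hRdef
    have hall : ∀ k : ℕ, ‖a (NN + k)‖ ≤ R := by
      intro k
      induction k with
      | zero =>
        have hz := le_max_left (‖a NN‖) (R₃ + 4)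
        rw [← hRdef] at hz
        simpa using hz
      | succ k ih =>
        have hs := step (NN + k) (Nat.le_add_right _ _)
        show ‖a (NN + k + 1)‖ ≤ R
        by_cases hcase : R₃ ≤ ‖a (NN + k)‖
        · have h1 := hs.2 hcase
          linarith only [h1, ih]
        · push_neg at hcase
          have h1 := hs.1
          have hR2 : R₃ + 4 ≤ R := le_max_right _ _
          linarith
    refine ⟨max R 1, le_max_right _ _, NN, fun n hn => ?_⟩
    obtain ⟨k, rfl⟩ : ∃ k, n = NN + k := ⟨n - NN, by omega⟩
    exact le_trans (hall k) (le_max_left _ _)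
  obtain ⟨R, hR1, NR, hRb⟩ := hbound
  -- convergence of a to 0
  have haT : Tendsto a atTop (nhds 0) := by
    rw [Metric.tendsto_atTop]
    intro δ hδ
    set ρ := min (δ/4) 1 with hρdef
    have hρ0 : 0 < ρ := lt_min (by positivity) one_pos
    have hρ1 : ρ ≤ 1 := min_le_right _ _
    have hρδ : ρ ≤ δ/4 := min_le_left _ _
    obtain ⟨m, hm, hslice⟩ := slice ρ hρ0
    set q₀ := m/(2*‖f‖) with hq₀def
    have hq₀0 : 0 < q₀ := by positivity
    set q := min (q₀^2/2) (ρ^2) with hqdef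
    have hq0 : 0 < q := lt_min (by positivity) (by positivity)
    have hqq : q ≤ q₀^2/2 := min_le_left _ _
    have hqρ : q ≤ ρ^2 := min_le_right _ _
    set κ := min (min 1 (q/32)) (q₀^2/(16*R+44)) with hκdef
    have hκ0 : 0 < κ := lt_min (lt_min one_pos (by positivity)) (by positivity)
    have hκ1 : κ ≤ 1 := le_trans (min_le_left _ _) (min_le_left _ _)
    have hκq : κ ≤ q/32 := le_trans (min_le_left _ _) (min_le_right _ _)
    have hκC : κ * (16*R+44) ≤ q₀^2 := by
      have h1 : κ ≤ q₀^2/(16*R+44) := min_le_right _ _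
      rw [← le_div_iff₀ (by positivity : (0:ℝ) < 16*R+44)]
      exact h1
    obtain ⟨Nb, hNb⟩ := nearB κ hκ0
    obtain ⟨Na, hNa⟩ := nearA κ hκ0
    set NN₂ : ℕ := ⌈R⌉₊ + 3 with hNN₂def
    have hNN₂R : R + 3 ≤ (NN₂:ℝ) := by
      have h1 := Nat.le_ceil R
      have h2 : ((⌈R⌉₊ + 3 : ℕ):ℝ) = (⌈R⌉₊:ℝ) + 3 := by push_cast; ring
      rw [hNN₂def, h2]
      linarith
    set ε' := min (min κ (ρ/2)) (m/(8*(‖f‖+1))) with hε'def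
    have hε'0 : 0 < ε' :=
      lt_min (lt_min hκ0 (by positivity)) (by positivity)
    have hε'κ : ε' ≤ κ := le_trans (min_le_left _ _) (min_le_left _ _)
    have hε'ρ : ε' ≤ ρ/2 := le_trans (min_le_left _ _) (min_le_right _ _)
    have hε'm : ε' ≤ m/(8*(‖f‖+1)) := min_le_right _ _
    have hε'f : ‖f‖ * ε' ≤ m/8 := by
      have h1 : ε' * (8*(‖f‖+1)) ≤ m := by
        rw [← le_div_iff₀ (by positivity)]
        exact hε'm
      linarith only [h1, hε'0, mul_nonneg hε'0.le hfpos.le]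
    obtain ⟨NAw, hNAw⟩ := hA NN₂ ε' hε'0
    obtain ⟨NBw, hNBw⟩ := hB NN₂ ε' hε'0
    set N := max (max (max Nb Na) (max NAw NBw)) (max NR 1) with hNdef2
    have step2 : ∀ n, N ≤ n →
        (‖a n‖ ≤ 2*ρ → ‖a (n+1)‖^2 ≤ (2*ρ)^2 + q) ∧
        (2*ρ ≤ ‖a n‖ → ‖a (n+1)‖^2 ≤ ‖a n‖^2 - q) := by
      intro n hn
      obtain ⟨cB, hcB, hcBn⟩ := hNb (n+1) (by omega)
      obtain ⟨dA, hdA, hdAn⟩ := hNa (n+1) (by omega)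
      have hPB := (hstep n).1
      have hPA := (hstep n).2
      have hbb : ‖b (n+1) - cB‖ ≤ ‖a n - cB‖ := hPB.dist_le (hBn (n+1)).2.2 hcB
      have haa : ‖a (n+1) - dA‖ ≤ ‖b (n+1) - dA‖ := hPA.dist_le (hAn (n+1)).2.2 hdA
      have g1 : ‖b (n+1)‖ ≤ ‖a n‖ + 2*κ := by
        have t1 : ‖b (n+1)‖ ≤ ‖b (n+1) - cB‖ + ‖cB‖ := by
          have t0 := norm_add_le (b (n+1) - cB) cB; simpa using t0
        have t2 : ‖a n - cB‖ ≤ ‖a n‖ + ‖cB‖ := norm_sub_le _ _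
        linarith only [t1, t2, hbb, hcBn]
      have g2 : ‖a (n+1)‖ ≤ ‖b (n+1)‖ + 2*κ := by
        have t1 : ‖a (n+1)‖ ≤ ‖a (n+1) - dA‖ + ‖dA‖ := by
          have t0 := norm_add_le (a (n+1) - dA) dA; simpa using t0
        have t2 : ‖b (n+1) - dA‖ ≤ ‖b (n+1)‖ + ‖dA‖ := norm_sub_le _ _
        linarith only [t1, t2, haa, hdAn]
      have hb0 : ‖a n‖ ≤ R := hRb n (by omega)
      constructor
      · intro hsmall
        have h1 : ‖a (n+1)‖ ≤ 2*ρ + 4*κ := by linarith only [g1, g2, hsmall]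
        have h3 : ‖a (n+1)‖^2 ≤ (2*ρ+4*κ)^2 := pow_le_pow_left₀ (norm_nonneg _) h1 2
        linarith only [h3, mul_le_mul_of_nonneg_left hρ1 hκ0.le,
          mul_le_mul_of_nonneg_left hκ1 hκ0.le, hκq, hκ0]
      · intro hbig
        have haAn : a n ∈ An n := by
          obtain ⟨k, rfl⟩ : ∃ k, n = k + 1 := ⟨n - 1, by omega⟩
          exact hamem k
        have hinf := hNAw n (by omega) (a n) (by linarith [hNN₂R])
        rw [Metric.infDist_zero_of_mem haAn, zero_sub, abs_neg,
          abs_of_nonneg Metric.infDist_nonneg] at hinf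
        obtain ⟨x', hx'A, hx'd⟩ := (Metric.infDist_lt_iff ⟨0, h0A⟩).mp hinf
        have hx'dd : ‖a n - x'‖ ≤ ε' := by rw [← dist_eq_norm]; exact hx'd.le
        have hx'n : ρ < ‖x'‖ := by
          have h4 : ‖a n‖ - ‖x'‖ ≤ ‖a n - x'‖ := norm_sub_norm_le _ _
          linarith only [h4, hx'dd, hε'ρ, hρ0, hbig]
        have hfx' : f x' < -m := by
          by_contra hcc2
          push_neg at hcc2
          exact absurd (hslice x' hx'A hcc2) (not_le.mpr hx'n)
        have hfa : f (a n) ≤ -(3*m/4) := by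
          have hb2 := f.le_opNorm (a n - x')
          rw [Real.norm_eq_abs, map_sub] at hb2
          have h5 := (abs_le.mp hb2).2
          have h6 : ‖f‖*‖a n - x'‖ ≤ ‖f‖*ε' :=
            mul_le_mul_of_nonneg_left hx'dd (norm_nonneg f)
          linarith only [h5, h6, hfx', hε'f, hm]
        have hbBn : b (n+1) ∈ Bn (n+1) := hbmem n
        have hbR : ‖b (n+1)‖ ≤ R + 2 := by linarith only [g1, hκ1, hb0, hκ0]
        have hinfb := hNBw (n+1) (by omega) (b (n+1)) (by linarith [hNN₂R])
        rw [Metric.infDist_zero_of_mem hbBn, zero_sub, abs_neg,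
          abs_of_nonneg Metric.infDist_nonneg] at hinfb
        obtain ⟨y', hy'B, hy'd⟩ := (Metric.infDist_lt_iff ⟨0, h0B⟩).mp hinfb
        have hy'0 : (0:ℝ) ≤ f y' := hy'B
        have hy'dd : ‖b (n+1) - y'‖ ≤ ε' := by rw [← dist_eq_norm]; exact hy'd.le
        have hfb : -(m/4) ≤ f (b (n+1)) := by
          have hb2 := f.le_opNorm (b (n+1) - y')
          rw [Real.norm_eq_abs, map_sub] at hb2
          have h5 := (abs_le.mp hb2).1
          have h6 : ‖f‖*‖b (n+1) - y'‖ ≤ ‖f‖*ε' :=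
            mul_le_mul_of_nonneg_left hy'dd (norm_nonneg f)
          linarith only [h5, h6, hy'0, hε'f, hm]
        have hsB : q₀ ≤ ‖a n - b (n+1)‖ := by
          have hdf := f.le_opNorm (b (n+1) - a n)
          rw [Real.norm_eq_abs, map_sub] at hdf
          have h5 := (abs_le.mp hdf).2
          have h7 : m/2 ≤ ‖f‖ * ‖b (n+1) - a n‖ := by
            linarith only [h5, hfa, hfb]
          rw [norm_sub_rev] at h7
          rw [hq₀def, div_le_iff₀ (by positivity : (0:ℝ) < 2*‖f‖)]
          linarith only [h7]
        have firm := hPB.dist_sq_le (hBn (n+1)).2.2 hcB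
        have h8 : ‖a n - cB‖ ≤ ‖a n‖ + κ := by
          linarith only [norm_sub_le (a n) cB, hcBn]
        have h9 : ‖a (n+1)‖ ≤ ‖b (n+1) - cB‖ + 3*κ := by
          have t1 : ‖b (n+1)‖ ≤ ‖b (n+1) - cB‖ + ‖cB‖ := by
            have t0 := norm_add_le (b (n+1) - cB) cB; simpa using t0
          linarith only [t1, g2, hcBn]
        have h10 : ‖b (n+1) - cB‖ ≤ R + 2 := by
          linarith only [hbb, h8, hb0, hκ1]
        have h11 : ‖a (n+1)‖^2 ≤ (‖b (n+1) - cB‖ + 3*κ)^2 :=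
          pow_le_pow_left₀ (norm_nonneg _) h9 2
        have h12 : q₀^2 ≤ ‖a n - b (n+1)‖^2 := pow_le_pow_left₀ hq₀0.le hsB 2
        have h13 : ‖a n - cB‖^2 ≤ (‖a n‖ + κ)^2 := pow_le_pow_left₀ (norm_nonneg _) h8 2
        have e1 : ‖a (n+1)‖^2 ≤ ‖b (n+1) - cB‖^2 + 6*κ*‖b (n+1) - cB‖ + 9*κ^2 := by
          linarith only [h11]
        have e2 : 6*κ*‖b (n+1) - cB‖ ≤ 6*κ*(R+2) := by
          linarith only [mul_le_mul_of_nonneg_left h10 hκ0.le]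
        have e3 : 9*κ^2 ≤ 9*κ := by
          linarith only [mul_le_mul_of_nonneg_left hκ1 hκ0.le]
        have e4 : (‖a n‖ + κ)^2 ≤ ‖a n‖^2 + 2*κ*R + κ := by
          linarith only [mul_le_mul_of_nonneg_left hb0 hκ0.le,
            mul_le_mul_of_nonneg_left hκ1 hκ0.le]
        have e5 : ‖a (n+1)‖^2 ≤ ‖a n‖^2 - q₀^2 + κ*(8*R+22) := by
          linarith only [e1, e2, e3, e4, firm, h12, h13]
        have e6 : κ*(8*R+22) ≤ q₀^2/2 := by linarith only [hκC]
        linarith only [e5, e6, hqq]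
    have inv : ∀ k : ℕ, ‖a (N + k)‖^2 ≤ max ((2*ρ)^2 + q) (R^2 - (k:ℝ)*q) := by
      intro k
      induction k with
      | zero =>
        have h1 : ‖a N‖ ≤ R := hRb N (by omega)
        have h2 : ‖a (N+0)‖^2 ≤ R^2 := by
          simpa using pow_le_pow_left₀ (norm_nonneg _) h1 2
        refine le_trans h2 (le_trans ?_ (le_max_right _ _))
        push_cast
        linarith only []
      | succ k ih =>
        have hs := step2 (N + k) (Nat.le_add_right _ _)
        have hcast : ((k+1:ℕ):ℝ) = (k:ℝ)+1 := by push_cast; ring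
        rw [hcast]
        show ‖a (N + k + 1)‖^2 ≤ max ((2*ρ)^2 + q) (R^2 - ((k:ℝ)+1)*q)
        by_cases hcase : ‖a (N+k)‖ ≤ 2*ρ
        · exact le_trans (hs.1 hcase) (le_max_left _ _)
        · push_neg at hcase
          have h1 := hs.2 hcase.le
          rcases le_max_iff.mp ih with h2 | h2
          · refine le_trans ?_ (le_max_left _ _)
            linarith only [h1, h2, hq0]
          · refine le_trans ?_ (le_max_right _ _)
            push_cast
            linarith only [h1, h2]
    set k₀ : ℕ := ⌈R^2/q⌉₊ + 1 with hk₀def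
    have hk₀ : R^2 - (k₀:ℝ)*q < 0 := by
      have h1 := Nat.le_ceil (R^2/q)
      have h2 : R^2/q + 1 ≤ (k₀:ℝ) := by
        rw [hk₀def]; push_cast; linarith
      have h3 : R^2/q * q = R^2 := by field_simp
      nlinarith [mul_le_mul_of_nonneg_right h2 hq0.le, hq0]
    refine ⟨N + k₀, fun n hn => ?_⟩
    obtain ⟨k, rfl⟩ : ∃ k, n = N + k := ⟨n - N, by omega⟩
    have hk : k₀ ≤ k := by omega
    have h1 := inv k
    have h2 : R^2 - (k:ℝ)*q ≤ R^2 - (k₀:ℝ)*q := by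
      have h3 : (k₀:ℝ) ≤ (k:ℝ) := by exact_mod_cast hk
      nlinarith [hq0]
    have h3 : ‖a (N+k)‖^2 ≤ (2*ρ)^2 + q := by
      rcases le_max_iff.mp h1 with h4 | h4
      · exact h4
      · linarith [hk₀]
    have h5 : ‖a (N+k)‖^2 ≤ (3*ρ)^2 := by nlinarith [hqρ, hρ0]
    have h6 : ‖a (N+k)‖ ≤ 3*ρ := by
      nlinarith [norm_nonneg (a (N+k)), hρ0, h5]
    rw [dist_zero_right]
    linarith [hρδ, hδ]
  -- convergence of b to 0
  have hbT : Tendsto b atTop (nhds 0) := by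
    have h1 : Tendsto (fun n => b (n+1)) atTop (nhds 0) := by
      rw [Metric.tendsto_atTop]
      intro δ hδ
      obtain ⟨Nb, hNb⟩ := nearB (δ/4) (by positivity)
      obtain ⟨N₁, hN₁⟩ := Metric.tendsto_atTop.mp haT (δ/4) (by positivity)
      refine ⟨max Nb N₁, fun n hn => ?_⟩
      obtain ⟨cB, hcB, hcBn⟩ := hNb (n+1) (by omega)
      have hbb : ‖b (n+1) - cB‖ ≤ ‖a n - cB‖ :=
        ((hstep n).1).dist_le (hBn (n+1)).2.2 hcB
      have h2 := hN₁ n (by omega)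
      rw [dist_zero_right] at h2
      rw [dist_zero_right]
      have t1 : ‖b (n+1)‖ ≤ ‖b (n+1) - cB‖ + ‖cB‖ := by
        have t0 := norm_add_le (b (n+1) - cB) cB; simpa using t0
      have t2 : ‖a n - cB‖ ≤ ‖a n‖ + ‖cB‖ := norm_sub_le _ _
      linarith
    exact (tendsto_add_atTop_iff_nat 1).mp h1
  exact ⟨⟨0, haT⟩, ⟨0, hbT⟩⟩

theorem stmt3 {X : Type*} [NormedAddCommGroup X] [InnerProductSpace ℝ X] [CompleteSpace X]
    (A : Set X) (hAc : IsClosed A) (hAv : Convex ℝ A) (hAint : (interior A).Nonempty)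
    (h0 : (0 : X) ∈ frontier A)
    (f : X →L[ℝ] ℝ) (hf : f ≠ 0) (hexp : StronglyExposes f A 0)
    (α : ℝ) (hα : α ≤ 0) :
    StablePair A {x : X | α ≤ f x} := by
  intro An Bn hAn hBn hA hB a₀ a b hab
  obtain ⟨-, hstep⟩ := hab
  have hf0 : f (0:X) = 0 := map_zero f
  have hfA : ∀ x ∈ A, f x ≤ 0 := fun x hx => by
    have h1 := hexp.2.1 x hx; rwa [hf0] at h1
  have h0A : (0:X) ∈ A := by
    have h1 := frontier_subset_closure (s := A) h0
    rwa [hAc.closure_eq] at h1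
  have hfpos : (0:ℝ) < ‖f‖ := norm_pos_iff.mpr hf
  rcases lt_or_eq_of_le hα with hneg | hzero
  · exact stmt3_case_neg A hAv hAint h0A f hfpos hfA α hneg An Bn hAn hBn hA hB a b hstep
  · subst hzero
    exact stmt3_case_zero A h0A f hfpos hf0 hfA hexp An Bn hAn hBn hA hB a b hstep
end
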